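/- arXiv:2407.02671 — 11 statements merged into one kernel-verified Lean document; each statement's English description precedes it below -/
import Mathlib

section
/- Let M₁, M₀ be {0,1}-valued random variables and Y_{1,1}, Y_{1,0} integrable random variables on a common probability space. Let G₁, G₀ be random variables with G_a having the same distribution as M_a, and (G₁, G₀) independent of (Y_{1,1}, Y_{1,0}). Define Y_{1,X} := Y_{1,1}·X + Y_{1,0}·(1−X) for any {0,1}-valued X. Then E[Y_{1,M₁} − Y_{1,M₀}] − E[Y_{1,G₁} − Y_{1,G₀}] = Cov(M₁ − M₀, Y_{1,1} − Y_{1,0}). -/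
open MeasureTheory ProbabilityTheory Set

/-- Squeeze lemma: a subset of a finite-measure measurable set whose outer measure
and the outer measure of its relative complement add up correctly is null measurable. -/
lemma nullMeasurableSet_of_add_eq {Ω : Type*} [MeasurableSpace Ω] {μ : Measure Ω}
    {X T : Set Ω} (hT : MeasurableSet T) (hfin : μ T ≠ ⊤) (hXT : X ⊆ T)
    (hsum : μ X + μ (T \ X) = μ T) : NullMeasurableSet X μ := by
  set C : Set Ω := toMeasurable μ X ∩ T with hCdef
  have hCm : MeasurableSet C := (measurableSet_toMeasurable μ X).inter hT
  have hXC : X ⊆ C := subset_inter (subset_toMeasurable μ X) hXT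
  have hμC : μ C = μ X :=
    le_antisymm (le_trans (measure_mono inter_subset_left)
      (measure_toMeasurable X).le) (measure_mono hXC)
  set C2 : Set Ω := toMeasurable μ (T \ X) ∩ T with hC2def
  have hC2m : MeasurableSet C2 := (measurableSet_toMeasurable μ (T \ X)).inter hT
  have hXC2 : T \ X ⊆ C2 := subset_inter (subset_toMeasurable μ (T \ X)) diff_subset
  have hμC2 : μ C2 = μ (T \ X) :=
    le_antisymm (le_trans (measure_mono inter_subset_left)
      (measure_toMeasurable (T \ X)).le) (measure_mono hXC2)
  set I : Set Ω := T \ C2 with hIdef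
  have hIm : MeasurableSet I := hT.diff hC2m
  have hIX : I ⊆ X := by
    intro ω hω
    by_contra hx
    exact hω.2 (hXC2 ⟨hω.1, hx⟩)
  have hcover : C ∪ C2 = T := by
    apply subset_antisymm
    · exact union_subset inter_subset_right inter_subset_right
    · intro ω hω
      by_cases hx : ω ∈ X
      · exact Or.inl (hXC hx)
      · exact Or.inr (hXC2 ⟨hω, hx⟩)
  have hie : μ (C ∪ C2) + μ (C ∩ C2) = μ C + μ C2 := measure_union_add_inter C hC2m
  have h0 : μ (C ∩ C2) = 0 := by
    rw [hcover, hμC, hμC2, hsum] at hie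
    have hie' : μ T + μ (C ∩ C2) = μ T + 0 := by rw [add_zero]; exact hie
    exact (ENNReal.add_right_inj hfin).1 hie'
  have hXI : μ (X \ I) = 0 := by
    refine measure_mono_null ?_ h0
    intro ω hω
    refine ⟨hXC hω.1, ?_⟩
    by_contra hc2
    exact hω.2 ⟨hXT hω.1, hc2⟩
  have hae : I =ᵐ[μ] X := by
    rw [Filter.eventuallyEq_set]
    have h1 : ∀ᵐ ω ∂μ, ω ∉ X \ I := by
      rw [MeasureTheory.ae_iff]
      simp only [not_not]; exact hXI
    filter_upwards [h1] with ω hω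
    constructor
    · exact fun h => hIX h
    · intro hx
      by_contra hi
      exact hω ⟨hx, hi⟩
  exact (hIm.nullMeasurableSet).congr hae

/-- A `{0,1}`-valued function independent of an integrable `D` that is not a.e. zero,
such that `D * G` is a.e. strongly measurable, is a.e. measurable. -/
lemma aemeasurable_of_indep_mul {Ω : Type*} [MeasurableSpace Ω] {μ : Measure Ω}
    [IsProbabilityMeasure μ] {G D : Ω → ℝ}
    (hG01 : ∀ ω, G ω = 0 ∨ G ω = 1)
    (hDsm : AEStronglyMeasurable D μ) (hDne : ¬ D =ᵐ[μ] (0 : Ω → ℝ))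
    (hK : AEStronglyMeasurable (fun ω => D ω * G ω) μ)
    (hind : IndepFun G D μ) : AEMeasurable G μ := by
  classical
  have hDae : AEMeasurable D μ := hDsm.aemeasurable
  obtain ⟨D', hD'sm, hDD'⟩ := hDsm
  have hD'm : Measurable D' := hD'sm.measurable
  -- S : measurable version of {D ≠ 0}
  set S : Set Ω := (D' ⁻¹' {0})ᶜ with hSdef
  have hSm : MeasurableSet S := (hD'm (measurableSet_singleton 0)).compl
  set S₀ : Set Ω := (D ⁻¹' {0})ᶜ with hS0def
  have hS0S : S₀ =ᵐ[μ] S := by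
    rw [Filter.eventuallyEq_set]
    filter_upwards [hDD'] with ω hω
    simp only [hS0def, hSdef, mem_compl_iff, mem_preimage, mem_singleton_iff, hω]
  have hS0ne : μ S₀ ≠ 0 := by
    intro h
    apply hDne
    have : ∀ᵐ ω ∂μ, ω ∉ S₀ := by
      rw [MeasureTheory.ae_iff]
      simpa using h
    filter_upwards [this] with ω hω
    simpa [hS0def] using hω
  set A : Set Ω := G ⁻¹' {1} with hAdef
  -- independence consequences
  have hAS0 : μ (A ∩ S₀) = μ A * μ S₀ := by
    have := hind.measure_inter_preimage_eq_mul {1} ({0}ᶜ)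
      (measurableSet_singleton 1) (measurableSet_singleton 0).compl
    simpa [hAdef, hS0def, Set.preimage_compl] using this
  have hAcS0 : μ (Aᶜ ∩ S₀) = μ Aᶜ * μ S₀ := by
    have := hind.measure_inter_preimage_eq_mul ({1}ᶜ) ({0}ᶜ)
      (measurableSet_singleton 1).compl (measurableSet_singleton 0).compl
    simpa [hAdef, hS0def, Set.preimage_compl] using this
  have hAS0c : μ (A ∩ S₀ᶜ) = μ A * μ S₀ᶜ := by
    have := hind.measure_inter_preimage_eq_mul {1} {0}
      (measurableSet_singleton 1) (measurableSet_singleton 0)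
    have he : D ⁻¹' {0} = S₀ᶜ := by simp [hS0def]
    simpa [hAdef, he] using this
  have hAcS0c : μ (Aᶜ ∩ S₀ᶜ) = μ Aᶜ * μ S₀ᶜ := by
    have := hind.measure_inter_preimage_eq_mul ({1}ᶜ) {0}
      (measurableSet_singleton 1).compl (measurableSet_singleton 0)
    have he : D ⁻¹' {0} = S₀ᶜ := by simp [hS0def]
    simpa [hAdef, Set.preimage_compl, he] using this
  -- A ∩ S₀ is null measurable via the quotient trick
  have hANS : NullMeasurableSet (A ∩ S₀) μ := by
    set u : Ω → ℝ := fun ω => (D ω * G ω) * (if D' ω = 0 then 0 else (D' ω)⁻¹) with hudef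
    have hum : AEMeasurable u μ := by
      apply hK.aemeasurable.mul
      apply Measurable.aemeasurable
      exact Measurable.ite (hD'm (measurableSet_singleton 0)) measurable_const hD'm.inv
    obtain ⟨v, hvm, huv⟩ := hum
    have : (A ∩ S₀ : Set Ω) =ᵐ[μ] v ⁻¹' {1} := by
      rw [Filter.eventuallyEq_set]
      filter_upwards [huv, hDD'] with ω h1 h2
      simp only [mem_inter_iff, hAdef, hS0def, mem_compl_iff, mem_preimage,
        mem_singleton_iff]
      constructor
      · rintro ⟨hg, hd⟩
        rw [← h1]
        have hd' : D' ω ≠ 0 := by rw [← h2]; exact hd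
        simp [hudef, hg, hd', h2, mul_inv_cancel₀]
      · intro hv
        rw [← h1] at hv
        by_cases hd' : D' ω = 0
        · simp [hudef, hd'] at hv
        · have hd : D ω ≠ 0 := by rw [h2]; exact hd'
          rcases hG01 ω with hg | hg
          · simp [hudef, hg] at hv
          · exact ⟨hg, hd⟩
    exact ((hvm (measurableSet_singleton 1)).nullMeasurableSet).congr this.symm
  -- Aᶜ ∩ S₀ is null measurable similarly, using D - D*G = D * 1_{G=0}
  have hAcNS : NullMeasurableSet (Aᶜ ∩ S₀) μ := by
    set u : Ω → ℝ := fun ω => (D ω - D ω * G ω) * (if D' ω = 0 then 0 else (D' ω)⁻¹) with hudef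
    have hum : AEMeasurable u μ := by
      apply AEMeasurable.mul
      · exact (hDae.sub hK.aemeasurable)
      · apply Measurable.aemeasurable
        exact Measurable.ite (hD'm (measurableSet_singleton 0)) measurable_const hD'm.inv
    obtain ⟨v, hvm, huv⟩ := hum
    have : (Aᶜ ∩ S₀ : Set Ω) =ᵐ[μ] v ⁻¹' {1} := by
      rw [Filter.eventuallyEq_set]
      filter_upwards [huv, hDD'] with ω h1 h2
      simp only [mem_inter_iff, hAdef, hS0def, mem_compl_iff, mem_preimage,
        mem_singleton_iff]
      constructor
      · rintro ⟨hg, hd⟩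
        have hg0 : G ω = 0 := by rcases hG01 ω with h | h; exact h; exact absurd h hg
        rw [← h1]
        have hd' : D' ω ≠ 0 := by rw [← h2]; exact hd
        simp [hudef, hg0, hd', h2, mul_inv_cancel₀]
      · intro hv
        rw [← h1] at hv
        by_cases hd' : D' ω = 0
        · simp [hudef, hd'] at hv
        · have hd : D ω ≠ 0 := by rw [h2]; exact hd'
          rcases hG01 ω with hg | hg
          · exact ⟨by rw [hg]; norm_num, hd⟩
          · simp [hudef, hg] at hv
    exact ((hvm (measurableSet_singleton 1)).nullMeasurableSet).congr this.symm
  -- measures add up on S₀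
  have hsplit : μ (A ∩ S₀) + μ (Aᶜ ∩ S₀) = μ S₀ := by
    have := measure_inter_add_diff₀ S₀ hANS
    have e1 : S₀ ∩ (A ∩ S₀) = A ∩ S₀ := by
      ext ω; simp only [mem_inter_iff, mem_compl_iff]; tauto
    have e2 : S₀ \ (A ∩ S₀) = Aᶜ ∩ S₀ := by
      ext ω; simp only [mem_diff, mem_inter_iff, mem_compl_iff, not_and]; tauto
    rwa [e1, e2] at this
  have hone : μ A + μ Aᶜ = 1 := by
    rw [hAS0, hAcS0, ← add_mul] at hsplit
    have hfin : μ S₀ ≠ ⊤ := measure_ne_top μ S₀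
    have : (μ A + μ Aᶜ) * μ S₀ = 1 * μ S₀ := by rw [one_mul, hsplit]
    exact (ENNReal.mul_left_inj hS0ne hfin).1 this
  -- transfer A ∩ S₀ to A ∩ S and handle the complement part with the squeeze lemma
  have hIS : ∀ B : Set Ω, (B ∩ S₀ : Set Ω) =ᵐ[μ] (B ∩ S : Set Ω) := by
    intro B
    rw [Filter.eventuallyEq_set] at hS0S ⊢
    filter_upwards [hS0S] with ω hω
    simp [mem_inter_iff, hω]
  have hISc : ∀ B : Set Ω, (B ∩ S₀ᶜ : Set Ω) =ᵐ[μ] (B ∩ Sᶜ : Set Ω) := by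
    intro B
    rw [Filter.eventuallyEq_set] at hS0S ⊢
    filter_upwards [hS0S] with ω hω
    simp [mem_inter_iff, hω]
  have hNS1 : NullMeasurableSet (A ∩ S) μ := hANS.congr (hIS A)
  have hNS2 : NullMeasurableSet (A ∩ Sᶜ) μ := by
    apply nullMeasurableSet_of_add_eq hSm.compl (measure_ne_top μ Sᶜ) inter_subset_right
    have e2 : Sᶜ \ (A ∩ Sᶜ) = Aᶜ ∩ Sᶜ := by
      ext ω; simp only [mem_diff, mem_inter_iff, mem_compl_iff, not_and]; tauto
    rw [e2]
    have m1 : μ (A ∩ Sᶜ) = μ A * μ Sᶜ := by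
      rw [← measure_congr (hISc A), hAS0c, measure_congr hS0S.compl]
    have m2 : μ (Aᶜ ∩ Sᶜ) = μ Aᶜ * μ Sᶜ := by
      rw [← measure_congr (hISc Aᶜ), hAcS0c, measure_congr hS0S.compl]
    rw [m1, m2, ← add_mul, hone, one_mul]
  have hANM : NullMeasurableSet A μ := by
    have : A = (A ∩ S) ∪ (A ∩ Sᶜ) := by rw [inter_union_compl]
    rw [this]
    exact hNS1.union hNS2
  -- conclude AEMeasurable G
  have htae : (toMeasurable μ A : Set Ω) =ᵐ[μ] A := hANM.toMeasurable_ae_eq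
  refine ⟨fun ω => if ω ∈ toMeasurable μ A then (1 : ℝ) else 0, ?_, ?_⟩
  · exact Measurable.ite (measurableSet_toMeasurable μ A) measurable_const measurable_const
  · rw [Filter.eventuallyEq_set] at htae
    filter_upwards [htae] with ω hω
    by_cases hA : ω ∈ A
    · have h1 : G ω = 1 := hA
      rw [h1, if_pos (hω.2 hA)]
    · have h0 : G ω = 0 := by
        rcases hG01 ω with h | h
        · exact h
        · exact absurd h hA
      have hnt : ω ∉ toMeasurable μ A := fun h => hA (hω.1 h)
      rw [h0, if_neg hnt]

/-- NIE − NIE^R = Cov(M₁ − M₀, Y₁₁ − Y₁₀). -/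
theorem stmt1 {Ω : Type*} [MeasurableSpace Ω] (μ : Measure Ω) [IsProbabilityMeasure μ]
    (M1 M0 G1 G0 Y11 Y10 : Ω → ℝ)
    (hM1 : ∀ ω, M1 ω = 0 ∨ M1 ω = 1) (hM0 : ∀ ω, M0 ω = 0 ∨ M0 ω = 1)
    (hG1 : ∀ ω, G1 ω = 0 ∨ G1 ω = 1) (hG0 : ∀ ω, G0 ω = 0 ∨ G0 ω = 1)
    (hdist1 : Measure.map G1 μ = Measure.map M1 μ)
    (hdist0 : Measure.map G0 μ = Measure.map M0 μ)
    (hindep : IndepFun (fun ω => (G1 ω, G0 ω)) (fun ω => (Y11 ω, Y10 ω)) μ)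
    (hY11 : Integrable Y11 μ) (hY10 : Integrable Y10 μ)
    (hIM1 : Integrable (fun ω => Y11 ω * M1 ω + Y10 ω * (1 - M1 ω)) μ)
    (hIM0 : Integrable (fun ω => Y11 ω * M0 ω + Y10 ω * (1 - M0 ω)) μ)
    (hIG1 : Integrable (fun ω => Y11 ω * G1 ω + Y10 ω * (1 - G1 ω)) μ)
    (hIG0 : Integrable (fun ω => Y11 ω * G0 ω + Y10 ω * (1 - G0 ω)) μ)
    (hcov : Integrable (fun ω => (M1 ω - M0 ω) * (Y11 ω - Y10 ω)) μ) :
    ((∫ ω, (Y11 ω * M1 ω + Y10 ω * (1 - M1 ω)) ∂μ)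
        - ∫ ω, (Y11 ω * M0 ω + Y10 ω * (1 - M0 ω)) ∂μ)
      - ((∫ ω, (Y11 ω * G1 ω + Y10 ω * (1 - G1 ω)) ∂μ)
        - ∫ ω, (Y11 ω * G0 ω + Y10 ω * (1 - G0 ω)) ∂μ)
    = (∫ ω, (M1 ω - M0 ω) * (Y11 ω - Y10 ω) ∂μ)
      - (∫ ω, (M1 ω - M0 ω) ∂μ) * ∫ ω, (Y11 ω - Y10 ω) ∂μ := by
  have iDM1 : Integrable (fun ω => (Y11 ω - Y10 ω) * M1 ω) μ :=
    (hIM1.sub hY10).congr (Filter.Eventually.of_forall fun ω => by simp only [Pi.sub_apply]; ring)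
  have iDM0 : Integrable (fun ω => (Y11 ω - Y10 ω) * M0 ω) μ :=
    (hIM0.sub hY10).congr (Filter.Eventually.of_forall fun ω => by simp only [Pi.sub_apply]; ring)
  have iDG1 : Integrable (fun ω => (Y11 ω - Y10 ω) * G1 ω) μ :=
    (hIG1.sub hY10).congr (Filter.Eventually.of_forall fun ω => by simp only [Pi.sub_apply]; ring)
  have iDG0 : Integrable (fun ω => (Y11 ω - Y10 ω) * G0 ω) μ :=
    (hIG0.sub hY10).congr (Filter.Eventually.of_forall fun ω => by simp only [Pi.sub_apply]; ring)
  have hDint : Integrable (fun ω => Y11 ω - Y10 ω) μ := hY11.sub hY10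
  have e : ∀ X : Ω → ℝ, Integrable (fun ω => (Y11 ω - Y10 ω) * X ω) μ →
      ∫ ω, (Y11 ω * X ω + Y10 ω * (1 - X ω)) ∂μ
        = (∫ ω, Y10 ω ∂μ) + ∫ ω, (Y11 ω - Y10 ω) * X ω ∂μ := by
    intro X hX
    rw [← integral_add hY10 hX]
    exact integral_congr_ae (Filter.Eventually.of_forall fun ω => by simp; ring)
  have hcov' : ∫ ω, (M1 ω - M0 ω) * (Y11 ω - Y10 ω) ∂μ
      = (∫ ω, (Y11 ω - Y10 ω) * M1 ω ∂μ) - ∫ ω, (Y11 ω - Y10 ω) * M0 ω ∂μ := by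
    rw [← integral_sub iDM1 iDM0]
    exact integral_congr_ae (Filter.Eventually.of_forall fun ω => by simp; ring)
  have key : (∫ ω, (Y11 ω - Y10 ω) * G1 ω ∂μ) - ∫ ω, (Y11 ω - Y10 ω) * G0 ω ∂μ
      = (∫ ω, (M1 ω - M0 ω) ∂μ) * ∫ ω, (Y11 ω - Y10 ω) ∂μ := by
    by_cases hD0 : (fun ω => Y11 ω - Y10 ω) =ᵐ[μ] (0 : Ω → ℝ)
    · have h1 : ∫ ω, (Y11 ω - Y10 ω) * G1 ω ∂μ = 0 := by
        apply integral_eq_zero_of_ae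
        filter_upwards [hD0] with ω hω
        simp only [Pi.zero_apply] at hω ⊢
        rw [hω, zero_mul]
      have h0 : ∫ ω, (Y11 ω - Y10 ω) * G0 ω ∂μ = 0 := by
        apply integral_eq_zero_of_ae
        filter_upwards [hD0] with ω hω
        simp only [Pi.zero_apply] at hω ⊢
        rw [hω, zero_mul]
      have hd : ∫ ω, (Y11 ω - Y10 ω) ∂μ = 0 := integral_eq_zero_of_ae hD0
      rw [h1, h0, hd, mul_zero, sub_zero]
    · -- nondegenerate case: everything is a.e. measurable
      set D : Ω → ℝ := fun ω => Y11 ω - Y10 ω with hDdef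
      have hind1 : IndepFun G1 D μ := by
        have := hindep.comp (φ := Prod.fst) (ψ := fun p : ℝ × ℝ => p.1 - p.2)
          measurable_fst (measurable_fst.sub measurable_snd)
        exact this
      have hind0 : IndepFun G0 D μ := by
        have := hindep.comp (φ := Prod.snd) (ψ := fun p : ℝ × ℝ => p.1 - p.2)
          measurable_snd (measurable_fst.sub measurable_snd)
        exact this
      have hmG1 : AEMeasurable G1 μ :=
        aemeasurable_of_indep_mul hG1 hDint.aestronglyMeasurable hD0
          iDG1.aestronglyMeasurable hind1
      have hmG0 : AEMeasurable G0 μ :=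
        aemeasurable_of_indep_mul hG0 hDint.aestronglyMeasurable hD0
          iDG0.aestronglyMeasurable hind0
      have hmM1 : AEMeasurable M1 μ := by
        by_contra h
        rw [Measure.map_of_not_aemeasurable h] at hdist1
        have h1 : (Measure.map G1 μ) Set.univ = 1 := by
          rw [Measure.map_apply_of_aemeasurable hmG1 MeasurableSet.univ]
          simp
        rw [hdist1] at h1
        simp at h1
      have hmM0 : AEMeasurable M0 μ := by
        by_contra h
        rw [Measure.map_of_not_aemeasurable h] at hdist0
        have h1 : (Measure.map G0 μ) Set.univ = 1 := by
          rw [Measure.map_apply_of_aemeasurable hmG0 MeasurableSet.univ]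
          simp
        rw [hdist0] at h1
        simp at h1
      have ibound : ∀ (X : Ω → ℝ), (∀ ω, X ω = 0 ∨ X ω = 1) → AEMeasurable X μ →
          Integrable X μ := by
        intro X hX hm
        apply (integrable_const (1 : ℝ)).mono' hm.aestronglyMeasurable
        apply Filter.Eventually.of_forall
        intro ω
        rcases hX ω with h | h <;> simp [h]
      have iG1 : Integrable G1 μ := ibound G1 hG1 hmG1
      have iG0 : Integrable G0 μ := ibound G0 hG0 hmG0
      have iM1 : Integrable M1 μ := ibound M1 hM1 hmM1
      have iM0 : Integrable M0 μ := ibound M0 hM0 hmM0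
      have eqint1 : ∫ ω, G1 ω ∂μ = ∫ ω, M1 ω ∂μ := by
        have l1 : ∫ x, x ∂(Measure.map G1 μ) = ∫ ω, G1 ω ∂μ :=
          integral_map hmG1 aestronglyMeasurable_id
        have l2 : ∫ x, x ∂(Measure.map M1 μ) = ∫ ω, M1 ω ∂μ :=
          integral_map hmM1 aestronglyMeasurable_id
        rw [← l1, ← l2, hdist1]
      have eqint0 : ∫ ω, G0 ω ∂μ = ∫ ω, M0 ω ∂μ := by
        have l1 : ∫ x, x ∂(Measure.map G0 μ) = ∫ ω, G0 ω ∂μ :=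
          integral_map hmG0 aestronglyMeasurable_id
        have l2 : ∫ x, x ∂(Measure.map M0 μ) = ∫ ω, M0 ω ∂μ :=
          integral_map hmM0 aestronglyMeasurable_id
        rw [← l1, ← l2, hdist0]
      have p1 : ∫ ω, D ω * G1 ω ∂μ = (∫ ω, D ω ∂μ) * ∫ ω, G1 ω ∂μ :=
        (hind1.symm).integral_fun_mul_eq_mul_integral hDint.aestronglyMeasurable hmG1.aestronglyMeasurable
      have p0 : ∫ ω, D ω * G0 ω ∂μ = (∫ ω, D ω ∂μ) * ∫ ω, G0 ω ∂μ :=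
        (hind0.symm).integral_fun_mul_eq_mul_integral hDint.aestronglyMeasurable hmG0.aestronglyMeasurable
      have hMsub : ∫ ω, (M1 ω - M0 ω) ∂μ = (∫ ω, M1 ω ∂μ) - ∫ ω, M0 ω ∂μ :=
        integral_sub iM1 iM0
      calc (∫ ω, (Y11 ω - Y10 ω) * G1 ω ∂μ) - ∫ ω, (Y11 ω - Y10 ω) * G0 ω ∂μ
          = (∫ ω, D ω ∂μ) * (∫ ω, G1 ω ∂μ) - (∫ ω, D ω ∂μ) * ∫ ω, G0 ω ∂μ := by
            rw [← p1, ← p0]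
        _ = (∫ ω, (M1 ω - M0 ω) ∂μ) * ∫ ω, (Y11 ω - Y10 ω) ∂μ := by
            rw [hMsub, eqint1, eqint0]; ring
  rw [e M1 iDM1, e M0 iDM0, e G1 iDG1, e G0 iDG0, hcov']
  linarith [key]
end

section
/- Let M₀ be a {0,1}-valued random variable and Y_{1,1}, Y_{1,0}, Y_{0,1}, Y_{0,0} integrable random variables on a common probability space. Let G₀ have the same distribution as M₀ and be independent of (Y_{1,1}, Y_{1,0}, Y_{0,1}, Y_{0,0}). Define Y_{a,X} := Y_{a,1}·X + Y_{a,0}·(1−X). Then E[Y_{1,M₀} − Y_{0,M₀}] − E[Y_{1,G₀} − Y_{0,G₀}] = Cov(M₀, Y_{1,1} − Y_{1,0} − Y_{0,1} + Y_{0,0}). -/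
open MeasureTheory ProbabilityTheory

/-- If a {0,1}-valued `G0` is independent of `T`, is not a.e.-measurable, and
`G0 * (f ∘ T)` is a.e. strongly measurable, then `f ∘ T =ᵐ[μ] 0`. -/
lemma aux_forced_zero {Ω : Type*} [MeasurableSpace Ω] {μ : Measure Ω} [IsProbabilityMeasure μ]
    {β : Type*} [MeasurableSpace β] {G0 : Ω → ℝ} {T : Ω → β} {f : β → ℝ}
    (hG0 : ∀ ω, G0 ω = 0 ∨ G0 ω = 1)
    (hindep : IndepFun G0 T μ) (hf : Measurable f)
    (hGm : ¬ AEMeasurable G0 μ)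
    (hprod : AEStronglyMeasurable (fun ω => G0 ω * f (T ω)) μ)
    (hΔm : AEStronglyMeasurable (fun ω => f (T ω)) μ) :
    (fun ω => f (T ω)) =ᵐ[μ] 0 := by
  by_contra hne
  set d : Ω → ℝ := hΔm.mk _ with hd_def
  have hdm : Measurable d := hΔm.stronglyMeasurable_mk.measurable
  have hd_ae : (fun ω => f (T ω)) =ᵐ[μ] d := hΔm.ae_eq_mk
  set g : Ω → ℝ := hprod.mk _ with hg_def
  have hgm : Measurable g := hprod.stronglyMeasurable_mk.measurable
  have hg_ae : (fun ω => G0 ω * f (T ω)) =ᵐ[μ] g := hprod.ae_eq_mk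
  set A : Set Ω := G0 ⁻¹' {1} with hA_def
  set t0 : Set Ω := T ⁻¹' (f ⁻¹' ({0}ᶜ)) with ht0_def
  have hS : MeasurableSet (f ⁻¹' ({0}ᶜ)) := hf (measurableSet_singleton 0).compl
  -- μ t0 ≠ 0
  have hμt0 : μ t0 ≠ 0 := by
    intro h0
    apply hne
    have : ∀ᵐ ω ∂μ, f (T ω) = 0 := by
      rw [ae_iff]
      have : {ω | ¬ f (T ω) = 0} = t0 := by
        ext ω; simp [ht0_def]
      rw [this]; exact h0
    filter_upwards [this] with ω h using h
  -- independence facts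
  have hA_meas : μ (A ∩ t0) = μ A * μ t0 :=
    hindep.measure_inter_preimage_eq_mul _ _ (measurableSet_singleton 1) hS
  have hAc_pre : G0 ⁻¹' {0} = Aᶜ := by
    ext ω; rcases hG0 ω with h | h <;> simp [hA_def, h]
  have hAc_meas : μ (Aᶜ ∩ t0) = μ Aᶜ * μ t0 := by
    have := hindep.measure_inter_preimage_eq_mul _ _ (measurableSet_singleton 0) hS
    rwa [hAc_pre] at this
  -- the measurable versions
  set t0' : Set Ω := {ω | d ω ≠ 0} with ht0'_def
  have ht0'_meas : MeasurableSet t0' := hdm (measurableSet_singleton 0).compl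
  have ht0ae : (t0 : Set Ω) =ᵐ[μ] t0' := by
    filter_upwards [hd_ae] with ω h
    have : (ω ∈ t0) ↔ (ω ∈ t0') := by
      simp only [ht0_def, ht0'_def, Set.mem_preimage, Set.mem_compl_iff,
        Set.mem_singleton_iff, Set.mem_setOf_eq, h]
    exact eq_iff_iff.2 this
  set E : Set Ω := {ω | g ω ≠ 0} ∩ t0' with hE_def
  have hE_meas : MeasurableSet E :=
    (hgm (measurableSet_singleton 0).compl).inter ht0'_meas
  have h1 : (A ∩ t0 : Set Ω) =ᵐ[μ] E := by
    filter_upwards [hg_ae, hd_ae] with ω hgω hdω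
    have hiff : ω ∈ A ∩ t0 ↔ ω ∈ E := by
      constructor
      · rintro ⟨h1', h2'⟩
        have hG1 : G0 ω = 1 := h1'
        have hfT : f (T ω) ≠ 0 := h2'
        have hd0 : d ω ≠ 0 := by rw [← hdω]; exact hfT
        have hgd : g ω = d ω := by rw [← hgω, hG1, one_mul, hdω]
        have hg0 : g ω ≠ 0 := by rw [hgd]; exact hd0
        exact ⟨hg0, hd0⟩
      · rintro ⟨hg0, hd0⟩
        have hg0' : g ω ≠ 0 := hg0
        have hd0' : d ω ≠ 0 := hd0
        have hG1 : G0 ω = 1 := by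
          rcases hG0 ω with h | h
          · have hgz : g ω = 0 := by rw [← hgω, h, zero_mul]
            exact absurd hgz hg0'
          · exact h
        have hfT : f (T ω) ≠ 0 := by rw [hdω]; exact hd0'
        exact ⟨hG1, hfT⟩
    exact eq_iff_iff.2 hiff
  have h2 : (Aᶜ ∩ t0 : Set Ω) =ᵐ[μ] (t0' \ E) := by
    filter_upwards [hg_ae, hd_ae] with ω hgω hdω
    have hiff : ω ∈ Aᶜ ∩ t0 ↔ ω ∈ t0' \ E := by
      constructor
      · rintro ⟨h1', h2'⟩
        have hfT : f (T ω) ≠ 0 := h2'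
        have hd0 : d ω ≠ 0 := by rw [← hdω]; exact hfT
        have hG00 : G0 ω = 0 := by
          rcases hG0 ω with h | h
          · exact h
          · exact absurd (show ω ∈ A from h) h1'
        have hg0 : g ω = 0 := by rw [← hgω, hG00, zero_mul]
        exact ⟨hd0, fun hE => absurd hg0 hE.1⟩
      · rintro ⟨hd0, hnE⟩
        have hd0' : d ω ≠ 0 := hd0
        have hfT : f (T ω) ≠ 0 := by rw [hdω]; exact hd0'
        have hg0 : g ω = 0 := by
          by_contra hgne
          exact hnE ⟨hgne, hd0'⟩
        have hG00 : G0 ω = 0 := by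
          rcases hG0 ω with h | h
          · exact h
          · exfalso
            apply hfT
            have hgf : g ω = f (T ω) := by rw [← hgω, h, one_mul]
            rw [← hgf, hg0]
        have hAc' : ω ∈ Aᶜ := by
          intro hA'
          have hc : G0 ω = 1 := hA'
          rw [hG00] at hc
          norm_num at hc
        exact ⟨hAc', hfT⟩
    exact eq_iff_iff.2 hiff
  -- measure identities
  have hμE : μ E = μ A * μ t0 := by rw [← measure_congr h1, hA_meas]
  have hμE' : μ (t0' \ E) = μ Aᶜ * μ t0 := by rw [← hAc_meas]; exact (measure_congr h2).symm
  have hEsub : E ⊆ t0' := Set.inter_subset_right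
  have hsplit : μ E + μ (t0' \ E) = μ t0 := by
    have := measure_inter_add_diff (μ := μ) t0' hE_meas
    rw [Set.inter_eq_right.2 hEsub] at this
    rw [this, ← measure_congr ht0ae]
  have hsum1 : μ A + μ Aᶜ = 1 := by
    have hmul : (μ A + μ Aᶜ) * μ t0 = 1 * μ t0 := by
      rw [add_mul, one_mul, ← hμE, ← hμE', hsplit]
    exact (ENNReal.mul_left_inj hμt0 (measure_ne_top μ t0)).1 hmul
  -- A is null measurable
  set E1 : Set Ω := toMeasurable μ A with hE1_def
  set E2 : Set Ω := toMeasurable μ Aᶜ with hE2_def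
  have hU : E1 ∪ E2 = Set.univ := by
    apply Set.eq_univ_of_univ_subset
    intro ω _
    by_cases h : ω ∈ A
    · exact Or.inl (subset_toMeasurable μ A h)
    · exact Or.inr (subset_toMeasurable μ Aᶜ h)
  have hI0 : μ (E1 ∩ E2) = 0 := by
    have h := measure_union_add_inter (μ := μ) E1 (measurableSet_toMeasurable μ Aᶜ)
    rw [hU, measure_univ, measure_toMeasurable, measure_toMeasurable, hsum1] at h
    have hh : (1 : ENNReal) + μ (E1 ∩ E2) = 1 + 0 := by rw [add_zero]; exact h
    exact (ENNReal.add_right_inj ENNReal.one_ne_top).1 hh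
  have hE2c_sub : E2ᶜ ⊆ A := by
    rw [Set.compl_subset_comm]
    exact subset_toMeasurable μ Aᶜ
  have hAE2 : (A : Set Ω) =ᵐ[μ] E2ᶜ := by
    refine ae_eq_set.2 ?_
    constructor
    · refine measure_mono_null ?_ hI0
      intro ω hω
      exact ⟨subset_toMeasurable μ A hω.1, not_not.1 hω.2⟩
    · have hemp : E2ᶜ \ A = ∅ := Set.diff_eq_empty.2 hE2c_sub
      exact (congrArg μ hemp).trans measure_empty
  -- contradiction: G0 is a.e. measurable
  apply hGm
  have hind : G0 =ᵐ[μ] (E2ᶜ).indicator (fun _ => (1 : ℝ)) := by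
    filter_upwards [hAE2] with ω h
    have hmem : (ω ∈ A) ↔ (ω ∈ E2ᶜ) := eq_iff_iff.1 h
    rcases hG0 ω with h0 | h1
    · have hnm : ω ∉ E2ᶜ := by
        rw [← hmem]
        intro hc
        have hc' : G0 ω = 1 := hc
        rw [h0] at hc'
        norm_num at hc'
      rw [Set.indicator_of_notMem hnm, h0]
    · have hm : ω ∈ E2ᶜ := hmem.1 h1
      rw [Set.indicator_of_mem hm, h1]
  exact ((measurable_const.indicator
    (measurableSet_toMeasurable μ Aᶜ).compl).aemeasurable).congr hind.symm

/-- NDE − NDE^R = Cov(M₀, Y₁₁ − Y₁₀ − Y₀₁ + Y₀₀). -/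
theorem stmt2 {Ω : Type*} [MeasurableSpace Ω] (μ : Measure Ω) [IsProbabilityMeasure μ]
    (M0 G0 Y11 Y10 Y01 Y00 : Ω → ℝ)
    (hM0 : ∀ ω, M0 ω = 0 ∨ M0 ω = 1) (hG0 : ∀ ω, G0 ω = 0 ∨ G0 ω = 1)
    (hdist0 : Measure.map G0 μ = Measure.map M0 μ)
    (hindep : IndepFun G0 (fun ω => (Y11 ω, Y10 ω, Y01 ω, Y00 ω)) μ)
    (hY11 : Integrable Y11 μ) (hY10 : Integrable Y10 μ)
    (hY01 : Integrable Y01 μ) (hY00 : Integrable Y00 μ)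
    (hI1M : Integrable (fun ω => Y11 ω * M0 ω + Y10 ω * (1 - M0 ω)) μ)
    (hI0M : Integrable (fun ω => Y01 ω * M0 ω + Y00 ω * (1 - M0 ω)) μ)
    (hI1G : Integrable (fun ω => Y11 ω * G0 ω + Y10 ω * (1 - G0 ω)) μ)
    (hI0G : Integrable (fun ω => Y01 ω * G0 ω + Y00 ω * (1 - G0 ω)) μ)
    (hcov : Integrable (fun ω => M0 ω * (Y11 ω - Y10 ω - Y01 ω + Y00 ω)) μ) :
    ((∫ ω, (Y11 ω * M0 ω + Y10 ω * (1 - M0 ω)) ∂μ)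
        - ∫ ω, (Y01 ω * M0 ω + Y00 ω * (1 - M0 ω)) ∂μ)
      - ((∫ ω, (Y11 ω * G0 ω + Y10 ω * (1 - G0 ω)) ∂μ)
        - ∫ ω, (Y01 ω * G0 ω + Y00 ω * (1 - G0 ω)) ∂μ)
    = (∫ ω, M0 ω * (Y11 ω - Y10 ω - Y01 ω + Y00 ω) ∂μ)
      - (∫ ω, M0 ω ∂μ) * ∫ ω, (Y11 ω - Y10 ω - Y01 ω + Y00 ω) ∂μ := by
  have hΔint : Integrable (fun ω => Y11 ω - Y10 ω - Y01 ω + Y00 ω) μ :=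
    ((hY11.sub hY10).sub hY01).add hY00
  have hGΔ : Integrable (fun ω => G0 ω * (Y11 ω - Y10 ω - Y01 ω + Y00 ω)) μ := by
    have heq : (fun ω => G0 ω * (Y11 ω - Y10 ω - Y01 ω + Y00 ω))
        = fun ω => ((Y11 ω * G0 ω + Y10 ω * (1 - G0 ω))
            - (Y01 ω * G0 ω + Y00 ω * (1 - G0 ω))) - (Y10 ω - Y00 ω) := by
      funext ω; ring
    rw [heq]
    exact (hI1G.sub hI0G).sub (hY10.sub hY00)
  -- key : E[G0 Δ] = E[M0] E[Δ]
  have key : ∫ ω, G0 ω * (Y11 ω - Y10 ω - Y01 ω + Y00 ω) ∂μ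
      = (∫ ω, M0 ω ∂μ) * ∫ ω, (Y11 ω - Y10 ω - Y01 ω + Y00 ω) ∂μ := by
    by_cases hGm : AEMeasurable G0 μ
    · -- G0 measurable case
      have hMm : AEMeasurable M0 μ := by
        by_contra h
        have h0 : Measure.map M0 μ = 0 := Measure.map_of_not_aemeasurable h
        rw [h0] at hdist0
        have hp : IsProbabilityMeasure (Measure.map G0 μ) := Measure.isProbabilityMeasure_map hGm
        rw [hdist0] at hp
        have hu : (0 : Measure ℝ) Set.univ = 1 := hp.measure_univ
        rw [Measure.coe_zero, Pi.zero_apply] at hu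
        exact zero_ne_one hu
      have hEq : ∫ ω, G0 ω ∂μ = ∫ ω, M0 ω ∂μ := by
        calc ∫ ω, G0 ω ∂μ = ∫ y, y ∂(Measure.map G0 μ) :=
              (integral_map hGm aestronglyMeasurable_id).symm
          _ = ∫ y, y ∂(Measure.map M0 μ) := by rw [hdist0]
          _ = ∫ ω, M0 ω ∂μ := integral_map hMm aestronglyMeasurable_id
      have hf : Measurable (fun x : ℝ × ℝ × ℝ × ℝ => x.1 - x.2.1 - x.2.2.1 + x.2.2.2) := by
        fun_prop
      have hind : IndepFun G0 (fun ω => Y11 ω - Y10 ω - Y01 ω + Y00 ω) μ :=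
        hindep.comp measurable_id hf
      rw [← hEq]
      exact hind.integral_fun_mul_eq_mul_integral (aestronglyMeasurable_iff_aemeasurable.2 hGm) hΔint.1
    · -- G0 not measurable : everything degenerates
      have hmapG : Measure.map G0 μ = 0 := Measure.map_of_not_aemeasurable hGm
      have hMm : ¬ AEMeasurable M0 μ := by
        intro h
        have hp : IsProbabilityMeasure (Measure.map M0 μ) := Measure.isProbabilityMeasure_map h
        rw [← hdist0, hmapG] at hp
        have hu : (0 : Measure ℝ) Set.univ = 1 := hp.measure_univ
        rw [Measure.coe_zero, Pi.zero_apply] at hu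
        exact zero_ne_one hu
      have hM0int0 : ∫ ω, M0 ω ∂μ = 0 :=
        integral_non_aestronglyMeasurable
          (fun h => hMm (aestronglyMeasurable_iff_aemeasurable.1 h))
      have hf : Measurable (fun x : ℝ × ℝ × ℝ × ℝ => x.1 - x.2.1 - x.2.2.1 + x.2.2.2) := by
        fun_prop
      have hΔ0 : (fun ω => (fun x : ℝ × ℝ × ℝ × ℝ => x.1 - x.2.1 - x.2.2.1 + x.2.2.2)
          ((fun ω => (Y11 ω, Y10 ω, Y01 ω, Y00 ω)) ω)) =ᵐ[μ] 0 :=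
        aux_forced_zero hG0 hindep hf hGm hGΔ.1 hΔint.1
      have hGΔ0 : (fun ω => G0 ω * (Y11 ω - Y10 ω - Y01 ω + Y00 ω)) =ᵐ[μ] 0 := by
        filter_upwards [hΔ0] with ω h
        simp only [Pi.zero_apply] at h ⊢
        rw [show Y11 ω - Y10 ω - Y01 ω + Y00 ω = (0 : ℝ) from h, mul_zero]
      rw [integral_congr_ae hGΔ0, hM0int0, zero_mul]
      simp
  -- Assemble the result
  have hsub10 : Integrable (fun ω => Y10 ω - Y00 ω) μ := hY10.sub hY00
  have eM : ∫ ω, (Y11 ω * M0 ω + Y10 ω * (1 - M0 ω)) ∂μ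
      - ∫ ω, (Y01 ω * M0 ω + Y00 ω * (1 - M0 ω)) ∂μ
      = ∫ ω, M0 ω * (Y11 ω - Y10 ω - Y01 ω + Y00 ω) ∂μ
        + (∫ ω, Y10 ω ∂μ - ∫ ω, Y00 ω ∂μ) := by
    rw [← integral_sub hI1M hI0M, ← integral_sub hY10 hY00,
      ← integral_add hcov hsub10]
    apply integral_congr_ae
    filter_upwards with ω
    ring
  have eG : ∫ ω, (Y11 ω * G0 ω + Y10 ω * (1 - G0 ω)) ∂μ
      - ∫ ω, (Y01 ω * G0 ω + Y00 ω * (1 - G0 ω)) ∂μ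
      = ∫ ω, G0 ω * (Y11 ω - Y10 ω - Y01 ω + Y00 ω) ∂μ
        + (∫ ω, Y10 ω ∂μ - ∫ ω, Y00 ω ∂μ) := by
    rw [← integral_sub hI1G hI0G, ← integral_sub hY10 hY00,
      ← integral_add hGΔ hsub10]
    apply integral_congr_ae
    filter_upwards with ω
    ring
  rw [eM, eG, key]
  ring
end

section
/- Let M₁, M₀ be {0,1}-valued and Y_{1,1}, Y_{1,0}, Y_{0,1}, Y_{0,0} integrable random variables. Let G₁, G₀ have the respective distributions of M₁, M₀ and be independent of the Y potential outcomes. Define Y_{a,X} := Y_{a,1}·X + Y_{a,0}·(1−X). Then E[Y_{1,M₁} − Y_{0,M₀}] − E[Y_{1,G₁} − Y_{0,G₀}] = Cov(M₁, Y_{1,1} − Y_{1,0}) − Cov(M₀, Y_{0,1} − Y_{0,0}). -/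
open MeasureTheory ProbabilityTheory

lemma key_aux {Ω : Type*} [MeasurableSpace Ω] (μ : Measure Ω) [IsProbabilityMeasure μ]
    (G M D : Ω → ℝ)
    (hG : ∀ ω, G ω = 0 ∨ G ω = 1)
    (hdist : Measure.map G μ = Measure.map M μ)
    (hind : IndepFun G D μ)
    (hD : Integrable D μ) (hGD : Integrable (fun ω => G ω * D ω) μ) :
    ∫ ω, G ω * D ω ∂μ = (∫ ω, M ω ∂μ) * ∫ ω, D ω ∂μ := by
  by_cases hGm : AEMeasurable G μ
  · -- G is a.e.-measurable: standard independence argument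
    have hGint : Integrable G μ :=
      (integrable_const (1:ℝ)).mono' hGm.aestronglyMeasurable
        (Filter.Eventually.of_forall fun ω => by rcases hG ω with h | h <;> simp [h])
    have hmul : ∫ ω, G ω * D ω ∂μ = (∫ ω, G ω ∂μ) * ∫ ω, D ω ∂μ :=
      hind.integral_fun_mul_eq_mul_integral hGint.aestronglyMeasurable hD.aestronglyMeasurable
    have hMm : AEMeasurable M μ := by
      by_contra hMm
      have h0 : Measure.map M μ = 0 := Measure.map_of_not_aemeasurable hMm
      have h1 : Measure.map G μ Set.univ = 1 := by
        rw [Measure.map_apply_of_aemeasurable hGm MeasurableSet.univ]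
        simp
      rw [hdist, h0] at h1
      simp at h1
    have hGM : ∫ ω, G ω ∂μ = ∫ ω, M ω ∂μ := by
      have e1 : ∫ x, x ∂(Measure.map G μ) = ∫ ω, G ω ∂μ :=
        integral_map hGm aestronglyMeasurable_id
      have e2 : ∫ x, x ∂(Measure.map M μ) = ∫ ω, M ω ∂μ :=
        integral_map hMm aestronglyMeasurable_id
      rw [← e1, ← e2, hdist]
    rw [hmul, hGM]
  · -- G not a.e.-measurable: then D = 0 a.e.
    have hDz : D =ᵐ[μ] 0 := by
      by_contra hne
      apply hGm
      -- measurable versions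
      have hDa : AEMeasurable D μ := hD.aemeasurable
      have hka : AEMeasurable (fun ω => G ω * D ω) μ := hGD.aemeasurable
      set D' := hDa.mk D with hD'def
      have hD'm : Measurable D' := hDa.measurable_mk
      have hDD' : D =ᵐ[μ] D' := hDa.ae_eq_mk
      set k := hka.mk _ with hkdef
      have hkm : Measurable k := hka.measurable_mk
      have hkk : (fun ω => G ω * D ω) =ᵐ[μ] k := hka.ae_eq_mk
      set A : Set Ω := G ⁻¹' {1} with hAdef
      set B : Set Ω := D ⁻¹' ({0}ᶜ) with hBdef
      set B' : Set Ω := D' ⁻¹' ({0}ᶜ) with hB'def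
      set K : Set Ω := k ⁻¹' ({0}ᶜ) with hKdef
      have hB'm : MeasurableSet B' := hD'm (measurableSet_singleton 0).compl
      have hKm : MeasurableSet K := hkm (measurableSet_singleton 0).compl
      have hBB' : B =ᵐ[μ] B' := by
        rw [Filter.eventuallyEq_set]
        filter_upwards [hDD'] with ω h
        simp [hBdef, hB'def, h]
      have hBpos : μ B ≠ 0 := by
        intro h
        apply hne
        rw [Filter.EventuallyEq, ae_iff]
        simpa [hBdef, Set.preimage] using h
      have hcompl : G ⁻¹' {0} = Aᶜ := by
        ext ω
        rcases hG ω with h | h <;> simp [hAdef, h]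
      have hi := indepFun_iff_measure_inter_preimage_eq_mul.mp hind
      have h1 := hi {1} ({0}ᶜ) (measurableSet_singleton 1) (measurableSet_singleton 0).compl
      have h0 := hi {0} ({0}ᶜ) (measurableSet_singleton 0) (measurableSet_singleton 0).compl
      rw [hcompl] at h0
      -- identify A ∩ B with K ∩ B' and Aᶜ ∩ B with Kᶜ ∩ B' up to null sets
      have hABK : (A ∩ B : Set Ω) =ᵐ[μ] (K ∩ B' : Set Ω) := by
        rw [Filter.eventuallyEq_set]
        filter_upwards [hDD', hkk] with ω h1' h2'
        rcases hG ω with h | h <;>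
          simp [hAdef, hBdef, hB'def, hKdef, Set.mem_preimage, ← h2', ← h1', h]
      have hABK' : (Aᶜ ∩ B : Set Ω) =ᵐ[μ] (Kᶜ ∩ B' : Set Ω) := by
        rw [Filter.eventuallyEq_set]
        filter_upwards [hDD', hkk] with ω h1' h2'
        rcases hG ω with h | h <;>
          simp [hAdef, hBdef, hB'def, hKdef, Set.mem_preimage, ← h2', ← h1', h]
      have hsum : μ (A ∩ B) + μ (Aᶜ ∩ B) = μ B := by
        rw [measure_congr hABK, measure_congr hABK', measure_congr hBB']
        have h2 : μ (B' ∩ K) + μ (B' \ K) = μ B' := measure_inter_add_diff (μ := μ) B' hKm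
        rw [Set.diff_eq_compl_inter, Set.inter_comm B' K] at h2
        exact h2
      have hABeq : μ (G ⁻¹' {1} ∩ D ⁻¹' ({0}ᶜ)) = μ A * μ B := h1
      have hABeq' : μ (Aᶜ ∩ D ⁻¹' ({0}ᶜ)) = μ Aᶜ * μ B := h0
      rw [show (G ⁻¹' {1} ∩ D ⁻¹' ({0}ᶜ) : Set Ω) = A ∩ B from rfl] at hABeq
      rw [show (Aᶜ ∩ D ⁻¹' ({0}ᶜ) : Set Ω) = Aᶜ ∩ B from rfl] at hABeq'
      have hAA : μ A + μ Aᶜ = 1 := by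
        have : (μ A + μ Aᶜ) * μ B = 1 * μ B := by
          rw [add_mul, one_mul, ← hABeq, ← hABeq', hsum]
        exact (ENNReal.mul_left_inj hBpos (measure_ne_top μ B)).mp this
      -- measurable hulls
      obtain ⟨A₁, hA₁sub, hA₁m, hA₁e⟩ := exists_measurable_superset μ A
      obtain ⟨A₂, hA₂sub, hA₂m, hA₂e⟩ := exists_measurable_superset μ Aᶜ
      have hUnion : μ (A₁ ∪ A₂) = 1 := by
        refine le_antisymm prob_le_one ?_
        have : (Set.univ : Set Ω) ⊆ A₁ ∪ A₂ := by
          intro ω _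
          by_cases hω : ω ∈ A
          · exact Or.inl (hA₁sub hω)
          · exact Or.inr (hA₂sub hω)
        calc (1 : ENNReal) = μ Set.univ := (measure_univ).symm
          _ ≤ μ (A₁ ∪ A₂) := measure_mono this
      have hInter : μ (A₁ ∩ A₂) = 0 := by
        have h := measure_union_add_inter (μ := μ) A₁ hA₂m
        rw [hUnion, hA₁e, hA₂e, hAA] at h
        have h1t : (1 : ENNReal) ≠ ⊤ := by simp
        exact (ENNReal.add_right_inj h1t).mp (h.trans (add_zero (1 : ENNReal)).symm)
      -- G is a.e. equal to the indicator of A₁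
      refine ⟨A₁.indicator (fun _ => (1:ℝ)), measurable_const.indicator hA₁m, ?_⟩
      have hsubset : {ω | G ω ≠ A₁.indicator (fun _ => (1:ℝ)) ω} ⊆ A₁ ∩ A₂ := by
        intro ω hω
        simp only [Set.mem_setOf_eq] at hω
        by_cases hA : ω ∈ A
        · exfalso; apply hω
          rw [Set.indicator_of_mem (hA₁sub hA)]
          simpa [hAdef] using hA
        · have h0' : G ω = 0 := by
            rcases hG ω with h | h
            · exact h
            · exact absurd (by simpa [hAdef] using h) hA
          have hω2 : ω ∈ A₂ := hA₂sub hA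
          by_cases hω1 : ω ∈ A₁
          · exact ⟨hω1, hω2⟩
          · exfalso; apply hω
            rw [Set.indicator_of_notMem hω1, h0']
      exact (ae_iff).mpr (measure_mono_null hsubset hInter)
    have hz1 : (fun ω => G ω * D ω) =ᵐ[μ] 0 := by
      filter_upwards [hDz] with ω h
      simp [h]
    rw [integral_eq_zero_of_ae hz1, integral_eq_zero_of_ae hDz, mul_zero]
/-- TE − TE^R = Cov(M₁, Y₁₁ − Y₁₀) − Cov(M₀, Y₀₁ − Y₀₀). -/
theorem stmt3 {Ω : Type*} [MeasurableSpace Ω] (μ : Measure Ω) [IsProbabilityMeasure μ]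
    (M1 M0 G1 G0 Y11 Y10 Y01 Y00 : Ω → ℝ)
    (hM1 : ∀ ω, M1 ω = 0 ∨ M1 ω = 1) (hM0 : ∀ ω, M0 ω = 0 ∨ M0 ω = 1)
    (hG1 : ∀ ω, G1 ω = 0 ∨ G1 ω = 1) (hG0 : ∀ ω, G0 ω = 0 ∨ G0 ω = 1)
    (hdist1 : Measure.map G1 μ = Measure.map M1 μ)
    (hdist0 : Measure.map G0 μ = Measure.map M0 μ)
    (hindep : IndepFun (fun ω => (G1 ω, G0 ω)) (fun ω => (Y11 ω, Y10 ω, Y01 ω, Y00 ω)) μ)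
    (hY11 : Integrable Y11 μ) (hY10 : Integrable Y10 μ)
    (hY01 : Integrable Y01 μ) (hY00 : Integrable Y00 μ)
    (hI1M : Integrable (fun ω => Y11 ω * M1 ω + Y10 ω * (1 - M1 ω)) μ)
    (hI0M : Integrable (fun ω => Y01 ω * M0 ω + Y00 ω * (1 - M0 ω)) μ)
    (hI1G : Integrable (fun ω => Y11 ω * G1 ω + Y10 ω * (1 - G1 ω)) μ)
    (hI0G : Integrable (fun ω => Y01 ω * G0 ω + Y00 ω * (1 - G0 ω)) μ)
    (hcov1 : Integrable (fun ω => M1 ω * (Y11 ω - Y10 ω)) μ)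
    (hcov0 : Integrable (fun ω => M0 ω * (Y01 ω - Y00 ω)) μ) :
    ((∫ ω, (Y11 ω * M1 ω + Y10 ω * (1 - M1 ω)) ∂μ)
        - ∫ ω, (Y01 ω * M0 ω + Y00 ω * (1 - M0 ω)) ∂μ)
      - ((∫ ω, (Y11 ω * G1 ω + Y10 ω * (1 - G1 ω)) ∂μ)
        - ∫ ω, (Y01 ω * G0 ω + Y00 ω * (1 - G0 ω)) ∂μ)
    = ((∫ ω, M1 ω * (Y11 ω - Y10 ω) ∂μ)
        - (∫ ω, M1 ω ∂μ) * ∫ ω, (Y11 ω - Y10 ω) ∂μ)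
      - ((∫ ω, M0 ω * (Y01 ω - Y00 ω) ∂μ)
        - (∫ ω, M0 ω ∂μ) * ∫ ω, (Y01 ω - Y00 ω) ∂μ) := by
  -- integrability of G·D terms
  have hGD1 : Integrable (fun ω => G1 ω * (Y11 ω - Y10 ω)) μ :=
    (hI1G.sub hY10).congr (Filter.Eventually.of_forall fun ω => by simp only [Pi.sub_apply]; ring)
  have hGD0 : Integrable (fun ω => G0 ω * (Y01 ω - Y00 ω)) μ :=
    (hI0G.sub hY00).congr (Filter.Eventually.of_forall fun ω => by simp only [Pi.sub_apply]; ring)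
  -- independence of each G with the corresponding difference
  have hind1 : IndepFun G1 (fun ω => Y11 ω - Y10 ω) μ :=
    hindep.comp measurable_fst (measurable_fst.sub (measurable_fst.comp measurable_snd))
  have hind0 : IndepFun G0 (fun ω => Y01 ω - Y00 ω) μ :=
    hindep.comp measurable_snd
      ((measurable_fst.comp (measurable_snd.comp measurable_snd)).sub
        (measurable_snd.comp (measurable_snd.comp measurable_snd)))
  -- key identities
  have hk1 : ∫ ω, G1 ω * (Y11 ω - Y10 ω) ∂μ
      = (∫ ω, M1 ω ∂μ) * ∫ ω, (Y11 ω - Y10 ω) ∂μ :=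
    key_aux μ G1 M1 (fun ω => Y11 ω - Y10 ω) hG1 hdist1 hind1 (hY11.sub hY10) hGD1
  have hk0 : ∫ ω, G0 ω * (Y01 ω - Y00 ω) ∂μ
      = (∫ ω, M0 ω ∂μ) * ∫ ω, (Y01 ω - Y00 ω) ∂μ :=
    key_aux μ G0 M0 (fun ω => Y01 ω - Y00 ω) hG0 hdist0 hind0 (hY01.sub hY00) hGD0
  -- expand the four integrals
  have e1 : ∫ ω, (Y11 ω * M1 ω + Y10 ω * (1 - M1 ω)) ∂μ
      = (∫ ω, Y10 ω ∂μ) + ∫ ω, M1 ω * (Y11 ω - Y10 ω) ∂μ := by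
    rw [← integral_add hY10 hcov1]
    exact integral_congr_ae (Filter.Eventually.of_forall fun ω => by ring)
  have e2 : ∫ ω, (Y01 ω * M0 ω + Y00 ω * (1 - M0 ω)) ∂μ
      = (∫ ω, Y00 ω ∂μ) + ∫ ω, M0 ω * (Y01 ω - Y00 ω) ∂μ := by
    rw [← integral_add hY00 hcov0]
    exact integral_congr_ae (Filter.Eventually.of_forall fun ω => by ring)
  have e3 : ∫ ω, (Y11 ω * G1 ω + Y10 ω * (1 - G1 ω)) ∂μ
      = (∫ ω, Y10 ω ∂μ) + ∫ ω, G1 ω * (Y11 ω - Y10 ω) ∂μ := by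
    rw [← integral_add hY10 hGD1]
    exact integral_congr_ae (Filter.Eventually.of_forall fun ω => by ring)
  have e4 : ∫ ω, (Y01 ω * G0 ω + Y00 ω * (1 - G0 ω)) ∂μ
      = (∫ ω, Y00 ω ∂μ) + ∫ ω, G0 ω * (Y01 ω - Y00 ω) ∂μ := by
    rw [← integral_add hY00 hGD0]
    exact integral_congr_ae (Filter.Eventually.of_forall fun ω => by ring)
  rw [e1, e2, e3, e4, hk1, hk0]
  ring
end

section
/- There exists a probability space and random variables M₁, M₀ taking values in {0,1} and Y_{1,1}, Y_{1,0} such that almost surely (M₁−M₀)(Y_{1,1}−Y_{1,0}) = 0 (the sharper mediation null holds), yet E[M₁−M₀]·E[Y_{1,1}−Y_{1,0}] = 1/4 ≠ 0. Concretely, on a two-point space with equal mass: on one point M₁−M₀ = 1 and Y_{1,1}−Y_{1,0} = 0; on the other M₁−M₀ = 0 and Y_{1,1}−Y_{1,0} = 1. -/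
open MeasureTheory

lemma int_aux (f : Bool → ℝ) :
    ∫ ω, f ω ∂((1/2 : ENNReal) • Measure.dirac true + (1/2 : ENNReal) • Measure.dirac false)
      = (1/2) * f true + (1/2) * f false := by
  have hm : Measurable f := measurable_of_finite f
  rw [integral_add_measure, integral_smul_measure, integral_smul_measure,
    integral_dirac, integral_dirac]
  · norm_num [smul_eq_mul]
  · have : IsFiniteMeasure ((1/2 : ENNReal) • Measure.dirac (true)) :=
      ⟨by simp [Measure.smul_apply]⟩
    exact .of_finite
  · have : IsFiniteMeasure ((1/2 : ENNReal) • Measure.dirac (false)) :=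
      ⟨by simp [Measure.smul_apply]⟩
    exact .of_finite

/-- The NIE^R violates the sharper mediation null: there are random
variables satisfying the sharper null with E[M₁−M₀]·E[Y₁₁−Y₁₀] = 1/4 ≠ 0. -/
theorem stmt6 :
    ∃ (Ω : Type) (_ : MeasurableSpace Ω) (μ : Measure Ω) (_ : IsProbabilityMeasure μ)
      (M1 M0 Y11 Y10 : Ω → ℝ),
      (∀ ω, M1 ω = 0 ∨ M1 ω = 1) ∧ (∀ ω, M0 ω = 0 ∨ M0 ω = 1) ∧
      (∀ᵐ ω ∂μ, (M1 ω - M0 ω) * (Y11 ω - Y10 ω) = 0) ∧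
      (∫ ω, (M1 ω - M0 ω) ∂μ) * (∫ ω, (Y11 ω - Y10 ω) ∂μ) = 1/4 ∧
      (1:ℝ)/4 ≠ 0 := by
  refine ⟨Bool, ⊤, (1/2 : ENNReal) • Measure.dirac true + (1/2 : ENNReal) • Measure.dirac false,
    ⟨?_⟩, (fun ω => if ω then 1 else 0), 0, (fun ω => if ω then 0 else 1), 0,
    fun ω => by by_cases h : ω <;> simp [h], fun ω => Or.inl rfl, ?_, ?_, by norm_num⟩
  · simp only [Measure.add_apply, Measure.smul_apply, Measure.dirac_apply_of_mem (Set.mem_univ _),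
      smul_eq_mul, mul_one]
    rw [ENNReal.add_halves]
  · refine Filter.Eventually.of_forall fun ω => ?_
    by_cases h : ω <;> simp [h]
  · rw [int_aux, int_aux]
    norm_num
end

section
/- Let C be a random variable (baseline confounder), M₁, M₀ random variables with finite support 𝓜, and {Y_{1,m}}_{m∈𝓜} integrable random variables. Then E[Y_{1,M₁}] − E[Y_{1,M₀}] − Σ_{m∈𝓜} E[ E[𝟙(M₁=m)−𝟙(M₀=m) | C] · E[Y_{1,m} | C] ] = Σ_{m∈𝓜} E[ Cov(𝟙(M₁=m)−𝟙(M₀=m), Y_{1,m} | C) ], where Y_{1,M_a} := Σ_{m∈𝓜} 𝟙(M_a = m)·Y_{1,m} and Cov(·,·|C) denotes conditional covariance given C. -/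
open MeasureTheory

/-- The σ-algebra generated by the baseline covariate `C`. -/
def sigmaGen {Ω : Type*} (C : Ω → ℝ) : MeasurableSpace Ω :=
  MeasurableSpace.comap C inferInstance

/-- Conditional expectation given `C`: `E[f | C]`. -/
noncomputable def condE {Ω : Type*} [MeasurableSpace Ω] (μ : Measure Ω) (C : Ω → ℝ)
    (f : Ω → ℝ) : Ω → ℝ :=
  μ[f | sigmaGen C]

/-- Conditional covariance given `C`: `Cov(f, g | C) = E[fg|C] − E[f|C]E[g|C]`. -/
noncomputable def condCov {Ω : Type*} [MeasurableSpace Ω] (μ : Measure Ω) (C : Ω → ℝ)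
    (f g : Ω → ℝ) : Ω → ℝ :=
  fun ω => condE μ C (fun ω' => f ω' * g ω') ω - condE μ C f ω * condE μ C g ω

/-- Indicator `𝟙(X = m)` as a real-valued random variable. -/
noncomputable def ind {Ω : Type*} (X : Ω → ℝ) (m : ℝ) : Ω → ℝ :=
  fun ω => if X ω = m then 1 else 0

/-- Proposition 2, NIE part, finite mediator support:
NIE − NIE^R = Σ_m E[Cov(𝟙(M₁=m)−𝟙(M₀=m), Y_{1,m} | C)]. -/
theorem stmt7 {Ω : Type*} [MeasurableSpace Ω] (μ : Measure Ω) [IsProbabilityMeasure μ]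
    (C : Ω → ℝ) (hC : Measurable C)
    (𝓜 : Finset ℝ) (M1 M0 : Ω → ℝ)
    (hM1 : ∀ ω, M1 ω ∈ 𝓜) (hM0 : ∀ ω, M0 ω ∈ 𝓜)
    (hM1meas : Measurable M1) (hM0meas : Measurable M0)
    (Y : ℝ → Ω → ℝ) (hY : ∀ m ∈ 𝓜, Integrable (Y m) μ) :
    (∫ ω, ∑ m ∈ 𝓜, ind M1 m ω * Y m ω ∂μ)
      - (∫ ω, ∑ m ∈ 𝓜, ind M0 m ω * Y m ω ∂μ)
      - ∑ m ∈ 𝓜, ∫ ω, (condE μ C (fun ω' => ind M1 m ω' - ind M0 m ω') ω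
            * condE μ C (Y m) ω) ∂μ
    = ∑ m ∈ 𝓜, ∫ ω, condCov μ C (fun ω' => ind M1 m ω' - ind M0 m ω') (Y m) ω ∂μ := by
  have hle : sigmaGen C ≤ ‹MeasurableSpace Ω› := hC.comap_le
  -- per-m facts
  have hindmeas : ∀ (X : Ω → ℝ), Measurable X → ∀ m : ℝ, Measurable (ind X m) := by
    intro X hX m
    exact Measurable.ite (hX (measurableSet_singleton m)) measurable_const measurable_const
  have hindbd : ∀ (X : Ω → ℝ) (m : ℝ) (ω : Ω), ‖ind X m ω‖ ≤ 1 := by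
    intro X m ω
    simp only [ind]
    split <;> simp
  have hprod : ∀ m ∈ 𝓜, ∀ (X : Ω → ℝ), Measurable X →
      Integrable (fun ω => ind X m ω * Y m ω) μ := by
    intro m hm X hX
    exact (hY m hm).bdd_mul (hindmeas X hX m).aestronglyMeasurable (Filter.Eventually.of_forall (hindbd X m))
  have hD : ∀ m : ℝ, Measurable (fun ω => ind M1 m ω - ind M0 m ω) :=
    fun m => (hindmeas M1 hM1meas m).sub (hindmeas M0 hM0meas m)
  have hDbd : ∀ (m : ℝ) (ω : Ω), ‖ind M1 m ω - ind M0 m ω‖ ≤ 2 := by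
    intro m ω
    calc ‖ind M1 m ω - ind M0 m ω‖ ≤ ‖ind M1 m ω‖ + ‖ind M0 m ω‖ := norm_sub_le _ _
    _ ≤ 1 + 1 := add_le_add (hindbd M1 m ω) (hindbd M0 m ω)
    _ = 2 := by norm_num
  have hDY : ∀ m ∈ 𝓜, Integrable (fun ω => (ind M1 m ω - ind M0 m ω) * Y m ω) μ := by
    intro m hm
    exact (hY m hm).bdd_mul (hD m).aestronglyMeasurable (Filter.Eventually.of_forall (hDbd m))
  -- integrability of condE D * condE Y
  have hcondDbd : ∀ m : ℝ, ∀ᵐ ω ∂μ, ‖condE μ C (fun ω' => ind M1 m ω' - ind M0 m ω') ω‖ ≤ (2:ℝ) := by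
    intro m
    have h2 : ∀ᵐ ω ∂μ, |(fun ω' => ind M1 m ω' - ind M0 m ω') ω| ≤ ((2:NNReal) : ℝ) :=
      Filter.Eventually.of_forall fun ω => by simpa [Real.norm_eq_abs] using hDbd m ω
    have := ae_bdd_condExp_of_ae_bdd (m := sigmaGen C) (μ := μ) h2
    filter_upwards [this] with ω hω
    simpa [Real.norm_eq_abs, condE] using hω
  have hprodcond : ∀ m ∈ 𝓜, Integrable (fun ω =>
      condE μ C (fun ω' => ind M1 m ω' - ind M0 m ω') ω * condE μ C (Y m) ω) μ := by
    intro m hm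
    exact (integrable_condExp).bdd_mul
      (stronglyMeasurable_condExp.mono hle).aestronglyMeasurable (hcondDbd m)
  -- swap sums and integrals
  rw [integral_finset_sum 𝓜 (fun m hm => hprod m hm M1 hM1meas),
      integral_finset_sum 𝓜 (fun m hm => hprod m hm M0 hM0meas),
      ← Finset.sum_sub_distrib, ← Finset.sum_sub_distrib]
  refine Finset.sum_congr rfl fun m hm => ?_
  have key : ∫ ω, condE μ C (fun ω' => (ind M1 m ω' - ind M0 m ω') * Y m ω') ω ∂μ
      = ∫ ω, (ind M1 m ω - ind M0 m ω) * Y m ω ∂μ :=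
    integral_condExp hle
  have h1 : (∫ ω, ind M1 m ω * Y m ω ∂μ) - ∫ ω, ind M0 m ω * Y m ω ∂μ
      = ∫ ω, (ind M1 m ω - ind M0 m ω) * Y m ω ∂μ := by
    rw [← integral_sub (hprod m hm M1 hM1meas) (hprod m hm M0 hM0meas)]
    congr 1
    ext ω
    ring
  rw [h1, ← key]
  exact (integral_sub (integrable_condExp (m := sigmaGen C)) (hprodcond m hm)).symm
end

section
/- Let C be a random variable, M₀ a random variable with finite support 𝓜, and {Y_{1,m}}_{m∈𝓜}, {Y_{0,m}}_{m∈𝓜} integrable. Then E[Y_{1,M₀} − Y_{0,M₀}] − Σ_{m∈𝓜} E[ E[Y_{1,m}−Y_{0,m} | C] · E[𝟙(M₀=m) | C] ] = Σ_{m∈𝓜} E[ Cov(𝟙(M₀=m), Y_{1,m}−Y_{0,m} | C) ], where Y_{a,M₀} := Σ_{m∈𝓜} 𝟙(M₀=m)·Y_{a,m}. -/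
open MeasureTheory

lemma ind_bound {Ω : Type*} (X : Ω → ℝ) (m : ℝ) (ω : Ω) : ‖ind X m ω‖ ≤ 1 := by
  simp only [ind]; split <;> simp

lemma ind_meas {Ω : Type*} [MeasurableSpace Ω] {X : Ω → ℝ} (hX : Measurable X) (m : ℝ) :
    Measurable (ind X m) := by
  unfold ind
  exact Measurable.ite (hX (measurableSet_singleton m)) measurable_const measurable_const

/-- Proposition 2, NDE part, finite mediator support:
NDE − NDE^R = Σ_m E[Cov(𝟙(M₀=m), Y_{1,m}−Y_{0,m} | C)]. -/
theorem stmt8 {Ω : Type*} [MeasurableSpace Ω] (μ : Measure Ω) [IsProbabilityMeasure μ]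
    (C : Ω → ℝ) (hC : Measurable C)
    (𝓜 : Finset ℝ) (M0 : Ω → ℝ) (hM0 : ∀ ω, M0 ω ∈ 𝓜) (hM0meas : Measurable M0)
    (Y1 Y0 : ℝ → Ω → ℝ)
    (hY1 : ∀ m ∈ 𝓜, Integrable (Y1 m) μ) (hY0 : ∀ m ∈ 𝓜, Integrable (Y0 m) μ) :
    (∫ ω, (∑ m ∈ 𝓜, ind M0 m ω * Y1 m ω - ∑ m ∈ 𝓜, ind M0 m ω * Y0 m ω) ∂μ)
      - ∑ m ∈ 𝓜, ∫ ω, (condE μ C (fun ω' => Y1 m ω' - Y0 m ω') ω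
            * condE μ C (ind M0 m) ω) ∂μ
    = ∑ m ∈ 𝓜, ∫ ω, condCov μ C (ind M0 m) (fun ω' => Y1 m ω' - Y0 m ω') ω ∂μ := by
  have hle : sigmaGen C ≤ ‹MeasurableSpace Ω› := fun s hs => by
    obtain ⟨t, ht, rfl⟩ := hs; exact hC ht
  -- integrability facts
  have hg : ∀ m ∈ 𝓜, Integrable (fun ω => Y1 m ω - Y0 m ω) μ :=
    fun m hm => (hY1 m hm).sub (hY0 m hm)
  have hfg : ∀ m ∈ 𝓜, Integrable (fun ω => ind M0 m ω * (Y1 m ω - Y0 m ω)) μ :=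
    fun m hm => (hg m hm).bdd_mul ((ind_meas hM0meas m).aestronglyMeasurable)
      (Filter.Eventually.of_forall (ind_bound M0 m))
  have hcondf_bdd : ∀ m : ℝ, ∀ᵐ ω ∂μ, ‖condE μ C (ind M0 m) ω‖ ≤ 1 := by
    intro m
    have hint : Integrable (ind M0 m) μ := by
      refine Integrable.mono' (integrable_const 1) ((ind_meas hM0meas m).aestronglyMeasurable) ?_
      exact Filter.Eventually.of_forall (ind_bound M0 m)
    have h1 : condE μ C (ind M0 m) ≤ᵐ[μ] fun _ => (1 : ℝ) := by
      have := condExp_mono (μ := μ) (m := sigmaGen C) hint (integrable_const 1)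
        (Filter.Eventually.of_forall (fun ω => by
          simp only [ind]; split <;> norm_num))
      simpa [condE, condExp_const hle] using this
    have h2 : (fun _ => (0 : ℝ)) ≤ᵐ[μ] condE μ C (ind M0 m) := by
      have := condExp_mono (μ := μ) (m := sigmaGen C) (integrable_const 0) hint
        (Filter.Eventually.of_forall (fun ω => by
          simp only [ind]; split <;> norm_num))
      simpa [condE, condExp_const hle] using this
    filter_upwards [h1, h2] with ω h1 h2
    rw [Real.norm_eq_abs, abs_le]; constructor <;> linarith
  have hprod : ∀ m ∈ 𝓜, Integrable
      (fun ω => condE μ C (ind M0 m) ω * condE μ C (fun ω' => Y1 m ω' - Y0 m ω') ω) μ :=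
    fun m hm => (integrable_condExp (m := sigmaGen C)).bdd_mul
      (stronglyMeasurable_condExp.mono hle).aestronglyMeasurable (hcondf_bdd m)
  -- rewrite LHS first integral as sum of integrals
  have hL : (∫ ω, (∑ m ∈ 𝓜, ind M0 m ω * Y1 m ω - ∑ m ∈ 𝓜, ind M0 m ω * Y0 m ω) ∂μ)
      = ∑ m ∈ 𝓜, ∫ ω, ind M0 m ω * (Y1 m ω - Y0 m ω) ∂μ := by
    rw [← integral_finset_sum 𝓜 hfg]
    congr 1; funext ω
    rw [← Finset.sum_sub_distrib]
    exact Finset.sum_congr rfl fun m _ => by ring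
  -- per-m identity
  have key : ∀ m ∈ 𝓜,
      (∫ ω, ind M0 m ω * (Y1 m ω - Y0 m ω) ∂μ)
        - ∫ ω, (condE μ C (fun ω' => Y1 m ω' - Y0 m ω') ω * condE μ C (ind M0 m) ω) ∂μ
      = ∫ ω, condCov μ C (ind M0 m) (fun ω' => Y1 m ω' - Y0 m ω') ω ∂μ := by
    intro m hm
    have hI : ∫ ω, condE μ C (fun ω' => ind M0 m ω' * (Y1 m ω' - Y0 m ω')) ω ∂μ
        = ∫ ω, ind M0 m ω * (Y1 m ω - Y0 m ω) ∂μ :=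
      integral_condExp hle
    simp only [condCov]
    have h1 : Integrable (condE μ C (fun ω => ind M0 m ω * (Y1 m ω - Y0 m ω))) μ :=
      integrable_condExp
    rw [integral_sub h1 (hprod m hm), hI]
    congr 1
    exact integral_congr_ae (Filter.Eventually.of_forall fun ω => mul_comm _ _)
  rw [hL, ← Finset.sum_sub_distrib]
  exact Finset.sum_congr rfl key
end

section
/- Under the linear structural equations Y_{a,m} = γ₀ + γ₁a + γ₂L_a + γ₃m + γ₄aL_a + γ₅am + γ₆L_a·m + γ₇aL_a·m + ε_Y, L_a = α₀ + α₁a + ε_L, M_{a'} = β₀ + β₁a' + β₂L_{a'} + β₃a'L_{a'} + ε_M, with all Greek-letter coefficients constants and square-integrable errors, and with G_{a'} an independent copy of M_{a'} (independent of (ε_L, ε_Y)): NIE − NIE^R = (γ₆ + γ₇)·β₃·Var(ε_L), where NIE = E[Y_{1,M₁} − Y_{1,M₀}] and NIE^R = E[Y_{1,G₁} − Y_{1,G₀}]. -/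
open MeasureTheory ProbabilityTheory

lemma int6 {Ω : Type*} [MeasurableSpace Ω] (μ : Measure Ω) [IsProbabilityMeasure μ]
    (c1 c2 c3 c5 c6 : ℝ) (f2 f3 f4 f5 f6 : Ω → ℝ)
    (h2 : Integrable f2 μ) (h3 : Integrable f3 μ) (h4 : Integrable f4 μ)
    (h5 : Integrable f5 μ) (h6 : Integrable f6 μ) :
    ∫ ω, (c1 + c2 * f2 ω + c3 * f3 ω + f4 ω + c5 * f5 ω + c6 * f6 ω) ∂μ
      = c1 + c2 * (∫ ω, f2 ω ∂μ) + c3 * (∫ ω, f3 ω ∂μ) + (∫ ω, f4 ω ∂μ)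
        + c5 * (∫ ω, f5 ω ∂μ) + c6 * (∫ ω, f6 ω ∂μ) := by
  rw [integral_add, integral_add, integral_add, integral_add, integral_add]
  · simp [MeasureTheory.integral_const_mul]
  all_goals
    first
    | exact h6.const_mul _
    | exact h5.const_mul _
    | exact h4
    | exact h3.const_mul _
    | exact h2.const_mul _
    | exact (integrable_const _)
    | apply Integrable.add
    | skip
  all_goals
    first
    | exact h5.const_mul _
    | exact h4
    | exact h3.const_mul _
    | exact h2.const_mul _
    | exact (integrable_const _)
    | apply Integrable.add
  all_goals
    first
    | exact h4
    | exact h3.const_mul _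
    | exact h2.const_mul _
    | exact (integrable_const _)
    | apply Integrable.add
  all_goals
    first
    | exact h3.const_mul _
    | exact h2.const_mul _
    | exact (integrable_const _)
    | apply Integrable.add
  all_goals
    first
    | exact h2.const_mul _
    | exact (integrable_const _)

/-- Proposition 4, NIE part:
under the linear structural equations, NIE − NIE^R = (γ₆ + γ₇)β₃ Var(ε_L). -/
theorem stmt11 {Ω : Type*} [MeasurableSpace Ω] (μ : Measure Ω) [IsProbabilityMeasure μ]
    (α0 α1 β0 β1 β2 β3 γ0 γ1 γ2 γ3 γ4 γ5 γ6 γ7 : ℝ)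
    (εL εM εY : Ω → ℝ)
    (hεL : Integrable εL μ) (hεM : Integrable εM μ) (hεY : Integrable εY μ)
    (hεL2 : Integrable (fun ω => εL ω * εL ω) μ)
    (hεLM : Integrable (fun ω => εL ω * εM ω) μ)
    (L : ℝ → Ω → ℝ) (M : ℝ → Ω → ℝ) (Y : ℝ → (Ω → ℝ) → Ω → ℝ)
    (hL : ∀ t ω, L t ω = α0 + α1 * t + εL ω)
    (hM : ∀ t ω, M t ω = β0 + β1 * t + β2 * L t ω + β3 * t * L t ω + εM ω)
    (hY : ∀ t (X : Ω → ℝ) ω, Y t X ω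
      = γ0 + γ1 * t + γ2 * L t ω + γ3 * X ω + γ4 * t * L t ω + γ5 * t * X ω
        + γ6 * L t ω * X ω + γ7 * t * L t ω * X ω + εY ω)
    (G1 G0 : Ω → ℝ)
    (hdist1 : Measure.map G1 μ = Measure.map (M 1) μ)
    (hdist0 : Measure.map G0 μ = Measure.map (M 0) μ)
    (hindep : IndepFun (fun ω => (G1 ω, G0 ω)) (fun ω => (εL ω, εY ω)) μ)
    (hI1 : Integrable (Y 1 (M 1)) μ) (hI2 : Integrable (Y 1 (M 0)) μ)
    (hI3 : Integrable (Y 1 G1) μ) (hI4 : Integrable (Y 1 G0) μ) :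
    ((∫ ω, Y 1 (M 1) ω ∂μ) - ∫ ω, Y 1 (M 0) ω ∂μ)
      - ((∫ ω, Y 1 G1 ω ∂μ) - ∫ ω, Y 1 G0 ω ∂μ)
    = (γ6 + γ7) * β3 * ((∫ ω, εL ω * εL ω ∂μ) - (∫ ω, εL ω ∂μ) ^ 2) := by
  -- abbreviations for constants
  set cA := γ0 + γ1 + (γ2 + γ4) * (α0 + α1) with hcA
  set kA := γ2 + γ4 with hkA
  set cB := γ3 + γ5 + (γ6 + γ7) * (α0 + α1) with hcB
  set kB := γ6 + γ7 with hkB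
  set cM1 := β0 + β1 + (β2 + β3) * (α0 + α1) with hcM1
  set kM1 := β2 + β3 with hkM1
  set cM0 := β0 + β2 * α0 with hcM0
  set kM0 := β2 with hkM0
  -- structural rewrites
  have hM1 : ∀ ω, M 1 ω = cM1 + kM1 * εL ω + εM ω := fun ω => by
    rw [hM 1 ω, hL 1 ω]; simp [hcM1, hkM1]; ring
  have hM0 : ∀ ω, M 0 ω = cM0 + kM0 * εL ω + εM ω := fun ω => by
    rw [hM 0 ω, hL 0 ω]; simp [hcM0, hkM0]; ring
  have hY1 : ∀ (X : Ω → ℝ) ω, Y 1 X ω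
      = cA + kA * εL ω + εY ω + (cB + kB * εL ω) * X ω := fun X ω => by
    rw [hY 1 X ω, hL 1 ω]; simp [hcA, hkA, hcB, hkB]; ring
  -- measurability / integrability of M 1, M 0
  have aemεL : AEMeasurable εL μ := hεL.aemeasurable
  have aemεM : AEMeasurable εM μ := hεM.aemeasurable
  have aemM1 : AEMeasurable (M 1) μ := by
    have : M 1 = fun ω => cM1 + kM1 * εL ω + εM ω := funext hM1
    rw [this]; exact ((aemeasurable_const.add (aemεL.const_mul _)).add aemεM)
  have aemM0 : AEMeasurable (M 0) μ := by
    have : M 0 = fun ω => cM0 + kM0 * εL ω + εM ω := funext hM0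
    rw [this]; exact ((aemeasurable_const.add (aemεL.const_mul _)).add aemεM)
  have intM1 : Integrable (M 1) μ := by
    have : M 1 = fun ω => cM1 + kM1 * εL ω + εM ω := funext hM1
    rw [this]; exact ((integrable_const _).add (hεL.const_mul _)).add hεM
  have intM0 : Integrable (M 0) μ := by
    have : M 0 = fun ω => cM0 + kM0 * εL ω + εM ω := funext hM0
    rw [this]; exact ((integrable_const _).add (hεL.const_mul _)).add hεM
  -- G1, G0 are a.e. measurable with the same distribution
  have aemG1 : AEMeasurable G1 μ := by
    refine aemeasurable_of_map_neZero ⟨fun h0 => ?_⟩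
    have h1 : (μ.map G1) Set.univ = 1 := by
      rw [hdist1]; exact (Measure.isProbabilityMeasure_map aemM1).measure_univ
    rw [h0] at h1; simp at h1
  have aemG0 : AEMeasurable G0 μ := by
    refine aemeasurable_of_map_neZero ⟨fun h0 => ?_⟩
    have h1 : (μ.map G0) Set.univ = 1 := by
      rw [hdist0]; exact (Measure.isProbabilityMeasure_map aemM0).measure_univ
    rw [h0] at h1; simp at h1
  have intG1 : Integrable G1 μ := by
    have h := (integrable_map_measure aestronglyMeasurable_id aemG1).symm.mp
    have h2 : Integrable id (μ.map G1) := by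
      rw [hdist1]
      exact (integrable_map_measure aestronglyMeasurable_id aemM1).mpr intM1
    exact (integrable_map_measure aestronglyMeasurable_id aemG1).mp h2
  have intG0 : Integrable G0 μ := by
    have h2 : Integrable id (μ.map G0) := by
      rw [hdist0]
      exact (integrable_map_measure aestronglyMeasurable_id aemM0).mpr intM0
    exact (integrable_map_measure aestronglyMeasurable_id aemG0).mp h2
  have hgv1 : ∫ ω, G1 ω ∂μ = ∫ ω, M 1 ω ∂μ := by
    calc ∫ ω, G1 ω ∂μ = ∫ x, id x ∂(μ.map G1) := (integral_map aemG1 aestronglyMeasurable_id).symm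
      _ = ∫ x, id x ∂(μ.map (M 1)) := by rw [hdist1]
      _ = ∫ ω, M 1 ω ∂μ := integral_map aemM1 aestronglyMeasurable_id
  have hgv0 : ∫ ω, G0 ω ∂μ = ∫ ω, M 0 ω ∂μ := by
    calc ∫ ω, G0 ω ∂μ = ∫ x, id x ∂(μ.map G0) := (integral_map aemG0 aestronglyMeasurable_id).symm
      _ = ∫ x, id x ∂(μ.map (M 0)) := by rw [hdist0]
      _ = ∫ ω, M 0 ω ∂μ := integral_map aemM0 aestronglyMeasurable_id
  -- independence consequences
  have hind1 : IndepFun εL G1 μ :=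
    (hindep.comp (measurable_fst) (measurable_fst)).symm
  have hind0 : IndepFun εL G0 μ :=
    (hindep.comp (measurable_snd) (measurable_fst)).symm
  have intLG1 : Integrable (fun ω => εL ω * G1 ω) μ := hind1.integrable_mul hεL intG1
  have intLG0 : Integrable (fun ω => εL ω * G0 ω) μ := hind0.integrable_mul hεL intG0
  have hmul1 : ∫ ω, εL ω * G1 ω ∂μ = (∫ ω, εL ω ∂μ) * ∫ ω, G1 ω ∂μ :=
    IndepFun.integral_fun_mul_eq_mul_integral hind1 hεL.aestronglyMeasurable intG1.aestronglyMeasurable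
  have hmul0 : ∫ ω, εL ω * G0 ω ∂μ = (∫ ω, εL ω ∂μ) * ∫ ω, G0 ω ∂μ :=
    IndepFun.integral_fun_mul_eq_mul_integral hind0 hεL.aestronglyMeasurable intG0.aestronglyMeasurable
  -- the four integrals
  have e1 : ∫ ω, Y 1 (M 1) ω ∂μ
      = (cA + cB * cM1) + (kA + cB * kM1 + kB * cM1) * (∫ ω, εL ω ∂μ)
        + cB * (∫ ω, εM ω ∂μ) + (∫ ω, εY ω ∂μ)
        + (kB * kM1) * (∫ ω, εL ω * εL ω ∂μ) + kB * (∫ ω, εL ω * εM ω ∂μ) := by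
    have h : ∀ ω, Y 1 (M 1) ω
        = (cA + cB * cM1) + (kA + cB * kM1 + kB * cM1) * εL ω
          + cB * εM ω + εY ω + (kB * kM1) * (εL ω * εL ω) + kB * (εL ω * εM ω) := fun ω => by
      rw [hY1 (M 1) ω, hM1 ω]; ring
    rw [show (fun ω => Y 1 (M 1) ω) = _ from funext h]
    exact int6 μ _ _ _ _ _ _ _ _ _ _ hεL hεM hεY hεL2 hεLM
  have e2 : ∫ ω, Y 1 (M 0) ω ∂μ
      = (cA + cB * cM0) + (kA + cB * kM0 + kB * cM0) * (∫ ω, εL ω ∂μ)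
        + cB * (∫ ω, εM ω ∂μ) + (∫ ω, εY ω ∂μ)
        + (kB * kM0) * (∫ ω, εL ω * εL ω ∂μ) + kB * (∫ ω, εL ω * εM ω ∂μ) := by
    have h : ∀ ω, Y 1 (M 0) ω
        = (cA + cB * cM0) + (kA + cB * kM0 + kB * cM0) * εL ω
          + cB * εM ω + εY ω + (kB * kM0) * (εL ω * εL ω) + kB * (εL ω * εM ω) := fun ω => by
      rw [hY1 (M 0) ω, hM0 ω]; ring
    rw [show (fun ω => Y 1 (M 0) ω) = _ from funext h]
    exact int6 μ _ _ _ _ _ _ _ _ _ _ hεL hεM hεY hεL2 hεLM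
  have e3 : ∫ ω, Y 1 G1 ω ∂μ
      = cA + kA * (∫ ω, εL ω ∂μ) + cB * (∫ ω, G1 ω ∂μ) + (∫ ω, εY ω ∂μ)
        + kB * (∫ ω, εL ω * G1 ω ∂μ) + 0 * (∫ ω, εL ω ∂μ) := by
    have h : ∀ ω, Y 1 G1 ω
        = cA + kA * εL ω + cB * G1 ω + εY ω + kB * (εL ω * G1 ω) + 0 * εL ω := fun ω => by
      rw [hY1 G1 ω]; ring
    rw [show (fun ω => Y 1 G1 ω) = _ from funext h]
    exact int6 μ _ _ _ _ _ _ _ _ _ _ hεL intG1 hεY intLG1 hεL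
  have e4 : ∫ ω, Y 1 G0 ω ∂μ
      = cA + kA * (∫ ω, εL ω ∂μ) + cB * (∫ ω, G0 ω ∂μ) + (∫ ω, εY ω ∂μ)
        + kB * (∫ ω, εL ω * G0 ω ∂μ) + 0 * (∫ ω, εL ω ∂μ) := by
    have h : ∀ ω, Y 1 G0 ω
        = cA + kA * εL ω + cB * G0 ω + εY ω + kB * (εL ω * G0 ω) + 0 * εL ω := fun ω => by
      rw [hY1 G0 ω]; ring
    rw [show (fun ω => Y 1 G0 ω) = _ from funext h]
    exact int6 μ _ _ _ _ _ _ _ _ _ _ hεL intG0 hεY intLG0 hεL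
  -- values of ∫ M 1, ∫ M 0
  have em1 : ∫ ω, M 1 ω ∂μ = cM1 + kM1 * (∫ ω, εL ω ∂μ) + (∫ ω, εM ω ∂μ) := by
    have h : ∀ ω, M 1 ω = cM1 + kM1 * εL ω + 0 * εM ω + εM ω + 0 * εL ω + 0 * εL ω := fun ω => by
      rw [hM1 ω]; ring
    rw [show (fun ω => M 1 ω) = _ from funext h]
    rw [int6 μ _ _ _ _ _ _ _ _ _ _ hεL hεM hεM hεL hεL]; ring
  have em0 : ∫ ω, M 0 ω ∂μ = cM0 + kM0 * (∫ ω, εL ω ∂μ) + (∫ ω, εM ω ∂μ) := by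
    have h : ∀ ω, M 0 ω = cM0 + kM0 * εL ω + 0 * εM ω + εM ω + 0 * εL ω + 0 * εL ω := fun ω => by
      rw [hM0 ω]; ring
    rw [show (fun ω => M 0 ω) = _ from funext h]
    rw [int6 μ _ _ _ _ _ _ _ _ _ _ hεL hεM hεM hεL hεL]; ring
  rw [e1, e2, e3, e4, hmul1, hmul0, hgv1, hgv0, em1, em0]
  simp only [hkB, hkM1, hkM0]
  ring
end

section
/- Under the same linear structural equations as in the NIE case: NDE − NDE^R = γ₇·β₂·Var(ε_L) + γ₇·Cov(ε_L, ε_M), where NDE = E[Y_{1,M₀} − Y_{0,M₀}] and NDE^R = E[Y_{1,G₀} − Y_{0,G₀}] with G₀ an independent copy of M₀. -/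
open MeasureTheory ProbabilityTheory

/-- Proposition 4, NDE part:
under the linear structural equations, NDE − NDE^R = γ₇β₂ Var(ε_L) + γ₇ Cov(ε_L, ε_M). -/
theorem stmt12 {Ω : Type*} [MeasurableSpace Ω] (μ : Measure Ω) [IsProbabilityMeasure μ]
    (α0 α1 β0 β1 β2 β3 γ0 γ1 γ2 γ3 γ4 γ5 γ6 γ7 : ℝ)
    (εL εM εY : Ω → ℝ)
    (hεL : Integrable εL μ) (hεM : Integrable εM μ) (hεY : Integrable εY μ)
    (hεL2 : Integrable (fun ω => εL ω * εL ω) μ)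
    (hεLM : Integrable (fun ω => εL ω * εM ω) μ)
    (L : ℝ → Ω → ℝ) (M : ℝ → Ω → ℝ) (Y : ℝ → (Ω → ℝ) → Ω → ℝ)
    (hL : ∀ t ω, L t ω = α0 + α1 * t + εL ω)
    (hM : ∀ t ω, M t ω = β0 + β1 * t + β2 * L t ω + β3 * t * L t ω + εM ω)
    (hY : ∀ t (X : Ω → ℝ) ω, Y t X ω
      = γ0 + γ1 * t + γ2 * L t ω + γ3 * X ω + γ4 * t * L t ω + γ5 * t * X ω
        + γ6 * L t ω * X ω + γ7 * t * L t ω * X ω + εY ω)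
    (G1 G0 : Ω → ℝ)
    (hdist1 : Measure.map G1 μ = Measure.map (M 1) μ)
    (hdist0 : Measure.map G0 μ = Measure.map (M 0) μ)
    (hindep : IndepFun (fun ω => (G1 ω, G0 ω)) (fun ω => (εL ω, εY ω)) μ)
    (hI1 : Integrable (Y 1 (M 0)) μ) (hI2 : Integrable (Y 0 (M 0)) μ)
    (hI3 : Integrable (Y 1 G0) μ) (hI4 : Integrable (Y 0 G0) μ) :
    ((∫ ω, Y 1 (M 0) ω ∂μ) - ∫ ω, Y 0 (M 0) ω ∂μ)
      - ((∫ ω, Y 1 G0 ω ∂μ) - ∫ ω, Y 0 G0 ω ∂μ)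
    = γ7 * β2 * ((∫ ω, εL ω * εL ω ∂μ) - (∫ ω, εL ω ∂μ) ^ 2)
      + γ7 * ((∫ ω, εL ω * εM ω ∂μ) - (∫ ω, εL ω ∂μ) * ∫ ω, εM ω ∂μ) := by

  -- explicit form of M 0
  have hM0 : ∀ ω, M 0 ω = (β0 + β2 * α0) + (β2 * εL ω + εM ω) := by
    intro ω; rw [hM, hL]; ring
  have hM0int : Integrable (M 0) μ := by
    have h : Integrable (fun ω => (β0 + β2 * α0) + (β2 * εL ω + εM ω)) μ :=
      (integrable_const _).add ((hεL.const_mul _).add hεM)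
    exact h.congr (Filter.Eventually.of_forall fun ω => (hM0 ω).symm)
  have hM0meas : AEMeasurable (M 0) μ := hM0int.aemeasurable
  have hG0meas : AEMeasurable G0 μ := by
    by_contra h
    have h0 : Measure.map G0 μ = 0 := Measure.map_of_not_aemeasurable h
    have hp : IsProbabilityMeasure (Measure.map (M 0) μ) :=
      Measure.isProbabilityMeasure_map hM0meas
    rw [← hdist0, h0] at hp
    have h1 : (0 : Measure Ω) Set.univ = 1 := hp.measure_univ
    rw [Measure.coe_zero, Pi.zero_apply] at h1
    exact zero_ne_one h1
  have hG0int : Integrable G0 μ := by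
    have h1 : Integrable id (Measure.map (M 0) μ) := by
      rw [integrable_map_measure aestronglyMeasurable_id hM0meas]
      exact hM0int
    rw [← hdist0, integrable_map_measure aestronglyMeasurable_id hG0meas] at h1
    exact h1
  have hEG0 : ∫ ω, G0 ω ∂μ = ∫ ω, M 0 ω ∂μ := by
    have h1 : ∫ x, id (G0 x) ∂μ = ∫ x, id (M 0 x) ∂μ := by
      rw [← integral_map hG0meas aestronglyMeasurable_id, hdist0,
        integral_map hM0meas aestronglyMeasurable_id]
    simpa using h1
  -- independence of G0 and εL
  have hind : IndepFun G0 εL μ := hindep.comp measurable_snd measurable_fst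
  have hmulint : Integrable (fun ω => εL ω * G0 ω) μ := by
    have h := hind.symm.integrable_mul hεL hG0int
    exact h.congr (Filter.Eventually.of_forall fun ω => rfl)
  have hmul : ∫ ω, εL ω * G0 ω ∂μ = (∫ ω, εL ω ∂μ) * ∫ ω, M 0 ω ∂μ := by
    have h := hind.symm.integral_mul_eq_mul_integral hεL.aestronglyMeasurable hG0int.aestronglyMeasurable
    calc ∫ ω, εL ω * G0 ω ∂μ = ∫ ω, (εL * G0) ω ∂μ := rfl
      _ = (∫ ω, εL ω ∂μ) * ∫ ω, G0 ω ∂μ := h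
      _ = (∫ ω, εL ω ∂μ) * ∫ ω, M 0 ω ∂μ := by rw [hEG0]
  -- integral of εL * M 0 and of M 0
  have i1 : Integrable (fun ω => β2 * (εL ω * εL ω) + εL ω * εM ω) μ :=
    (hεL2.const_mul _).add hεLM
  have i2 : Integrable (fun ω => (β0 + β2 * α0) * εL ω
      + (β2 * (εL ω * εL ω) + εL ω * εM ω)) μ := (hεL.const_mul _).add i1
  have hLM0int : Integrable (fun ω => εL ω * M 0 ω) μ :=
    i2.congr (Filter.Eventually.of_forall fun ω => by simp only [hM0]; ring)
  have hELM0 : ∫ ω, εL ω * M 0 ω ∂μ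
      = (β0 + β2 * α0) * (∫ ω, εL ω ∂μ)
        + (β2 * (∫ ω, εL ω * εL ω ∂μ) + ∫ ω, εL ω * εM ω ∂μ) := by
    have hc : ∫ ω, εL ω * M 0 ω ∂μ
        = ∫ ω, ((β0 + β2 * α0) * εL ω + (β2 * (εL ω * εL ω) + εL ω * εM ω)) ∂μ :=
      integral_congr_ae (Filter.Eventually.of_forall fun ω => by simp only [hM0]; ring)
    rw [hc, integral_add (hεL.const_mul _) i1, integral_add (hεL2.const_mul _) hεLM,
      integral_const_mul, integral_const_mul]
  have i3 : Integrable (fun ω => β2 * εL ω + εM ω) μ := (hεL.const_mul _).add hεM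
  have hEM0 : ∫ ω, M 0 ω ∂μ
      = (β0 + β2 * α0) + (β2 * (∫ ω, εL ω ∂μ) + ∫ ω, εM ω ∂μ) := by
    have hc : ∫ ω, M 0 ω ∂μ
        = ∫ ω, ((β0 + β2 * α0) + (β2 * εL ω + εM ω)) ∂μ :=
      integral_congr_ae (Filter.Eventually.of_forall fun ω => hM0 ω)
    rw [hc, integral_add (integrable_const _) i3, integral_add (hεL.const_mul _) hεM,
      integral_const_mul, integral_const, probReal_univ,
      smul_eq_mul, one_mul]
  -- general formula for ∫ Y t X
  have hYint : ∀ (t : ℝ) (X : Ω → ℝ), Integrable X μ →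
      Integrable (fun ω => εL ω * X ω) μ →
      ∫ ω, Y t X ω ∂μ
        = (γ0 + γ1 * t + (γ2 + γ4 * t) * (α0 + α1 * t))
          + (γ2 + γ4 * t) * (∫ ω, εL ω ∂μ)
          + (γ3 + γ5 * t + (γ6 + γ7 * t) * (α0 + α1 * t)) * (∫ ω, X ω ∂μ)
          + (γ6 + γ7 * t) * (∫ ω, εL ω * X ω ∂μ)
          + ∫ ω, εY ω ∂μ := by
    intro t X hX hLX
    have j1 : Integrable (fun ω => (γ0 + γ1 * t + (γ2 + γ4 * t) * (α0 + α1 * t))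
        + (γ2 + γ4 * t) * εL ω) μ := (integrable_const _).add (hεL.const_mul _)
    have j2 : Integrable (fun ω => (γ0 + γ1 * t + (γ2 + γ4 * t) * (α0 + α1 * t))
        + (γ2 + γ4 * t) * εL ω
        + (γ3 + γ5 * t + (γ6 + γ7 * t) * (α0 + α1 * t)) * X ω) μ :=
      j1.add (hX.const_mul _)
    have j3 : Integrable (fun ω => (γ0 + γ1 * t + (γ2 + γ4 * t) * (α0 + α1 * t))
        + (γ2 + γ4 * t) * εL ω
        + (γ3 + γ5 * t + (γ6 + γ7 * t) * (α0 + α1 * t)) * X ω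
        + (γ6 + γ7 * t) * (εL ω * X ω)) μ := j2.add (hLX.const_mul _)
    have hc : ∫ ω, Y t X ω ∂μ
        = ∫ ω, ((γ0 + γ1 * t + (γ2 + γ4 * t) * (α0 + α1 * t))
            + (γ2 + γ4 * t) * εL ω
            + (γ3 + γ5 * t + (γ6 + γ7 * t) * (α0 + α1 * t)) * X ω
            + (γ6 + γ7 * t) * (εL ω * X ω)
            + εY ω) ∂μ :=
      integral_congr_ae (Filter.Eventually.of_forall fun ω => by
        simp only [hY, hL]; ring)
    rw [hc, integral_add j3 hεY, integral_add j2 (hLX.const_mul _),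
      integral_add j1 (hX.const_mul _),
      integral_add (integrable_const _) (hεL.const_mul _),
      integral_const, probReal_univ, smul_eq_mul, one_mul,
      integral_const_mul, integral_const_mul, integral_const_mul]
  have e1 := hYint 1 (M 0) hM0int hLM0int
  have e2 := hYint 0 (M 0) hM0int hLM0int
  have e3 := hYint 1 G0 hG0int hmulint
  have e4 := hYint 0 G0 hG0int hmulint
  rw [e1, e2, e3, e4, hEG0, hmul, hELM0, hEM0]
  ring
end

section
/- Suppose the random variables Y_{1,m} − Y_{0,m} = B do not depend on m ∈ 𝓜 (finite support of M₀), i.e., there is a single integrable random variable B with Y_{1,m} − Y_{0,m} = B for all m. Then Σ_{m∈𝓜} E[ Cov(𝟙(M₀=m), Y_{1,m} − Y_{0,m} | C) ] = 0, and hence NDE = NDE^R. -/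
open MeasureTheory

/-- Proposition 5, NDE part: if Y_{1,m} − Y_{0,m} = B does not depend
on m, then the sum of conditional covariances vanishes and NDE = NDE^R. -/
theorem stmt14 {Ω : Type*} [MeasurableSpace Ω] (μ : Measure Ω) [IsProbabilityMeasure μ]
    (C : Ω → ℝ) (hC : Measurable C)
    (𝓜 : Finset ℝ) (M0 : Ω → ℝ) (hM0 : ∀ ω, M0 ω ∈ 𝓜) (hM0meas : Measurable M0)
    (Y1 Y0 : ℝ → Ω → ℝ)
    (hY1 : ∀ m ∈ 𝓜, Integrable (Y1 m) μ) (hY0 : ∀ m ∈ 𝓜, Integrable (Y0 m) μ)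
    (B : Ω → ℝ) (hB : Integrable B μ)
    (hBeq : ∀ m ∈ 𝓜, ∀ ω, Y1 m ω - Y0 m ω = B ω) :
    (∑ m ∈ 𝓜, ∫ ω, condCov μ C (ind M0 m) (fun ω' => Y1 m ω' - Y0 m ω') ω ∂μ = 0)
    ∧ (∫ ω, (∑ m ∈ 𝓜, ind M0 m ω * Y1 m ω - ∑ m ∈ 𝓜, ind M0 m ω * Y0 m ω) ∂μ
        = ∑ m ∈ 𝓜, ∫ ω, (condE μ C (fun ω' => Y1 m ω' - Y0 m ω') ω
            * condE μ C (ind M0 m) ω) ∂μ) := by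
  classical
  have hm : sigmaGen C ≤ ‹MeasurableSpace Ω› := fun s hs => by
    obtain ⟨t, ht, rfl⟩ := hs
    exact hC ht
  have hIndmeas : ∀ m : ℝ, Measurable (ind M0 m) := fun m =>
    Measurable.ite (hM0meas (measurableSet_singleton m)) measurable_const measurable_const
  have hIndle : ∀ m : ℝ, ∀ ω, ‖ind M0 m ω‖ ≤ 1 := by
    intro m ω; simp only [ind]; split <;> simp
  have hInd : ∀ m : ℝ, Integrable (ind M0 m) μ := fun m =>
    (integrable_const (1:ℝ)).mono' (hIndmeas m).aestronglyMeasurable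
      (Filter.Eventually.of_forall (hIndle m))
  have hIndB : ∀ m : ℝ, Integrable (fun ω => ind M0 m ω * B ω) μ := fun m =>
    hB.bdd_mul (c := 1) (hIndmeas m).aestronglyMeasurable
      (Filter.Eventually.of_forall (hIndle m))
  -- bound on condexp of indicator
  have hbound : ∀ m : ℝ, ∀ᵐ ω ∂μ, ‖condE μ C (ind M0 m) ω‖ ≤ 1 := by
    intro m
    have h0 : (0 : Ω → ℝ) ≤ᵐ[μ] condE μ C (ind M0 m) := by
      refine condExp_nonneg (Filter.Eventually.of_forall fun ω => ?_)
      simp only [ind, Pi.zero_apply]; split <;> simp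
    have h1 : condE μ C (ind M0 m) ≤ᵐ[μ] μ[(fun _ => (1:ℝ)) | sigmaGen C] := by
      refine condExp_mono (hInd m) (integrable_const 1)
        (Filter.Eventually.of_forall fun ω => ?_)
      simp only [ind]; split <;> simp
    rw [condExp_const hm] at h1
    filter_upwards [h0, h1] with ω hω0 hω1
    rw [Real.norm_eq_abs, abs_le]
    refine ⟨?_, hω1⟩
    have h' : (0:ℝ) ≤ condE μ C (ind M0 m) ω := by simpa using hω0
    linarith
  have hprod : ∀ m : ℝ, Integrable (fun ω => condE μ C B ω * condE μ C (ind M0 m) ω) μ := by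
    intro m
    have h : Integrable (fun ω => condE μ C (ind M0 m) ω * condE μ C B ω) μ :=
      (integrable_condExp).bdd_mul
        (stronglyMeasurable_condExp.mono hm).aestronglyMeasurable (hbound m)
    exact h.congr (Filter.Eventually.of_forall fun ω => mul_comm _ _)
  -- sum of indicators is 1
  have hsum : ∀ ω, ∑ m ∈ 𝓜, ind M0 m ω = 1 := by
    intro ω
    simp only [ind]
    rw [Finset.sum_ite_eq 𝓜 (M0 ω) (fun _ => (1:ℝ))]
    simp [hM0 ω]
  -- sum of condexps of indicators is a.e. 1
  have hce1 : (fun ω => ∑ m ∈ 𝓜, condE μ C (ind M0 m) ω) =ᵐ[μ] fun _ => (1:ℝ) := by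
    have h1 := condExp_finsetSum (μ := μ) (m := sigmaGen C) (s := 𝓜)
      (f := fun m => ind M0 m) (fun m _ => hInd m)
    have h2 : (∑ m ∈ 𝓜, ind M0 m) = fun _ => (1:ℝ) := by
      funext ω
      rw [Finset.sum_apply]
      exact hsum ω
    rw [h2, condExp_const hm] at h1
    filter_upwards [h1] with ω hω
    simpa [Finset.sum_apply, condE] using hω.symm
  -- first key sum: ∑ ∫ condE(ind*B) = ∫ B
  have key1 : ∑ m ∈ 𝓜, ∫ ω, condE μ C (fun ω' => ind M0 m ω' * B ω') ω ∂μ = ∫ ω, B ω ∂μ := by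
    have h1 : ∀ m ∈ 𝓜, ∫ ω, condE μ C (fun ω' => ind M0 m ω' * B ω') ω ∂μ
        = ∫ ω, ind M0 m ω * B ω ∂μ := fun m _ => integral_condExp hm
    rw [Finset.sum_congr rfl h1, ← integral_finset_sum _ fun m _ => hIndB m]
    congr 1
    funext ω
    rw [← Finset.sum_mul, hsum ω, one_mul]
  -- second key sum: ∑ ∫ condE B * condE ind = ∫ B
  have key2 : ∑ m ∈ 𝓜, ∫ ω, condE μ C B ω * condE μ C (ind M0 m) ω ∂μ = ∫ ω, B ω ∂μ := by
    rw [← integral_finset_sum _ fun m _ => hprod m]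
    have : ∫ ω, ∑ m ∈ 𝓜, condE μ C B ω * condE μ C (ind M0 m) ω ∂μ
        = ∫ ω, condE μ C B ω ∂μ := by
      refine integral_congr_ae ?_
      filter_upwards [hce1] with ω hω
      rw [← Finset.mul_sum, hω, mul_one]
    rw [this]
    exact integral_condExp hm
  -- rewrite the differences as B
  have hDB : ∀ m ∈ 𝓜, (fun ω' => Y1 m ω' - Y0 m ω') = B := fun m hmem =>
    funext fun ω => hBeq m hmem ω
  constructor
  · have hcongr : ∀ m ∈ 𝓜,
        ∫ ω, condCov μ C (ind M0 m) (fun ω' => Y1 m ω' - Y0 m ω') ω ∂μ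
        = (∫ ω, condE μ C (fun ω' => ind M0 m ω' * B ω') ω ∂μ)
          - ∫ ω, condE μ C B ω * condE μ C (ind M0 m) ω ∂μ := by
      intro m hmem
      have hprod' : Integrable (fun ω => condE μ C (ind M0 m) ω * condE μ C B ω) μ :=
        (hprod m).congr (Filter.Eventually.of_forall fun ω => mul_comm _ _)
      simp only [condCov, hBeq m hmem]
      rw [show condE μ C (fun ω' => B ω') = condE μ C B from rfl]
      have hi : Integrable (condE μ C (fun ω' => ind M0 m ω' * B ω')) μ := integrable_condExp
      rw [integral_sub hi hprod']
      congr 1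
      exact integral_congr_ae (Filter.Eventually.of_forall fun ω => mul_comm _ _)
    rw [Finset.sum_congr rfl hcongr, Finset.sum_sub_distrib, key1, key2, sub_self]
  · have hlhs : (fun ω => ∑ m ∈ 𝓜, ind M0 m ω * Y1 m ω - ∑ m ∈ 𝓜, ind M0 m ω * Y0 m ω)
        = B := by
      funext ω
      rw [← Finset.sum_sub_distrib]
      have : ∀ m ∈ 𝓜, ind M0 m ω * Y1 m ω - ind M0 m ω * Y0 m ω = ind M0 m ω * B ω := by
        intro m hmem
        rw [← mul_sub, hBeq m hmem]
      rw [Finset.sum_congr rfl this, ← Finset.sum_mul, hsum ω, one_mul]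
    rw [hlhs]
    have hrhs : ∀ m ∈ 𝓜,
        ∫ ω, (condE μ C (fun ω' => Y1 m ω' - Y0 m ω') ω * condE μ C (ind M0 m) ω) ∂μ
        = ∫ ω, condE μ C B ω * condE μ C (ind M0 m) ω ∂μ := by
      intro m hmem
      rw [hDB m hmem]
    rw [Finset.sum_congr rfl hrhs, key2]
end

section
/- Let Y₁, Y₀ be random variables with finite supports 𝓣 and 𝓢 respectively, and let H₁, H₀ be independent random variables with H₁ distributed as Y₁ and H₀ distributed as Y₀. Then P(Y₁ ≥ Y₀) − P(H₁ ≥ H₀) = Σ_{t∈𝓣} Σ_{s∈𝓢} 𝟙(t ≥ s) · Cov(𝟙(Y₁ = t), 𝟙(Y₀ = s)). -/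
open MeasureTheory ProbabilityTheory

lemma key_split {Ω : Type*} [MeasurableSpace Ω] (μ : Measure Ω)
    (X Z : Ω → ℝ) (hXm : Measurable X) (hZm : Measurable Z) (𝓣 𝓢 : Finset ℝ)
    (hX : μ {ω | X ω ∉ 𝓣} = 0) (hZ : μ {ω | Z ω ∉ 𝓢} = 0) :
    μ {ω | Z ω ≤ X ω} =
      ∑ t ∈ 𝓣, ∑ s ∈ 𝓢, if s ≤ t then μ {ω | X ω = t ∧ Z ω = s} else 0 := by
  have h1 : μ {ω | Z ω ≤ X ω} = μ ({ω | Z ω ≤ X ω} ∩ {ω | X ω ∈ 𝓣} ∩ {ω | Z ω ∈ 𝓢}) := by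
    rw [measure_inter_conull, measure_inter_conull]
    · exact hX
    · exact hZ
  rw [h1]
  have h2 : ({ω | Z ω ≤ X ω} ∩ {ω | X ω ∈ 𝓣} ∩ {ω | Z ω ∈ 𝓢} : Set Ω)
      = ⋃ p ∈ ((𝓣 ×ˢ 𝓢).filter (fun p => p.2 ≤ p.1)), {ω | X ω = p.1 ∧ Z ω = p.2} := by
    ext ω
    simp only [Set.mem_inter_iff, Set.mem_setOf_eq, Set.mem_iUnion, Finset.mem_filter,
      Finset.mem_product]
    constructor
    · rintro ⟨⟨hle, hT⟩, hS⟩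
      exact ⟨(X ω, Z ω), ⟨⟨hT, hS⟩, hle⟩, rfl, rfl⟩
    · rintro ⟨⟨t, s⟩, ⟨⟨hT, hS⟩, hle⟩, rfl, rfl⟩
      exact ⟨⟨hle, hT⟩, hS⟩
  rw [h2]
  rw [measure_biUnion_finset]
  · rw [Finset.sum_filter, Finset.sum_product]
  · intro p hp q hq hpq
    simp only [Function.onFun, Set.disjoint_left]
    intro ω h1 h2
    exact hpq (Prod.ext (h1.1.symm.trans h2.1) (h1.2.symm.trans h2.2))
  · intro p hp
    exact (hXm (measurableSet_singleton p.1)).inter (hZm (measurableSet_singleton p.2))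

/-- Proposition 7, discrete outcomes:
P(Y₁ ≥ Y₀) − P(H₁ ≥ H₀) = Σ_t Σ_s 𝟙(t ≥ s) Cov(𝟙(Y₁=t), 𝟙(Y₀=s)). -/
theorem stmt18 {Ω : Type*} [MeasurableSpace Ω] (μ : Measure Ω) [IsProbabilityMeasure μ]
    (Y1 Y0 H1 H0 : Ω → ℝ)
    (hY1meas : Measurable Y1) (hY0meas : Measurable Y0)
    (hH1meas : Measurable H1) (hH0meas : Measurable H0)
    (𝓣 𝓢 : Finset ℝ) (hY1supp : ∀ ω, Y1 ω ∈ 𝓣) (hY0supp : ∀ ω, Y0 ω ∈ 𝓢)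
    (hdist1 : Measure.map H1 μ = Measure.map Y1 μ)
    (hdist0 : Measure.map H0 μ = Measure.map Y0 μ)
    (hindep : IndepFun H1 H0 μ) :
    (μ {ω | Y0 ω ≤ Y1 ω}).toReal - (μ {ω | H0 ω ≤ H1 ω}).toReal
    = ∑ t ∈ 𝓣, ∑ s ∈ 𝓢, (if s ≤ t then (1:ℝ) else 0)
        * ((μ {ω | Y1 ω = t ∧ Y0 ω = s}).toReal
            - (μ {ω | Y1 ω = t}).toReal * (μ {ω | Y0 ω = s}).toReal) := by
  have hTc : MeasurableSet ((↑𝓣 : Set ℝ)ᶜ) := 𝓣.measurableSet.compl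
  have hSc : MeasurableSet ((↑𝓢 : Set ℝ)ᶜ) := 𝓢.measurableSet.compl
  have hY1n : μ {ω | Y1 ω ∉ 𝓣} = 0 := by
    have : {ω | Y1 ω ∉ 𝓣} = (∅ : Set Ω) := by ext ω; simp [hY1supp ω]
    simp [this]
  have hY0n : μ {ω | Y0 ω ∉ 𝓢} = 0 := by
    have : {ω | Y0 ω ∉ 𝓢} = (∅ : Set Ω) := by ext ω; simp [hY0supp ω]
    simp [this]
  have hH1n : μ {ω | H1 ω ∉ 𝓣} = 0 := by
    have h : {ω | H1 ω ∉ 𝓣} = H1 ⁻¹' ((↑𝓣 : Set ℝ)ᶜ) := rfl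
    rw [h, ← Measure.map_apply hH1meas hTc, hdist1, Measure.map_apply hY1meas hTc]
    exact hY1n
  have hH0n : μ {ω | H0 ω ∉ 𝓢} = 0 := by
    have h : {ω | H0 ω ∉ 𝓢} = H0 ⁻¹' ((↑𝓢 : Set ℝ)ᶜ) := rfl
    rw [h, ← Measure.map_apply hH0meas hSc, hdist0, Measure.map_apply hY0meas hSc]
    exact hY0n
  have hH1t : ∀ t : ℝ, μ {ω | H1 ω = t} = μ {ω | Y1 ω = t} := by
    intro t
    have h1 : {ω | H1 ω = t} = H1 ⁻¹' {t} := rfl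
    have h2 : {ω | Y1 ω = t} = Y1 ⁻¹' {t} := rfl
    rw [h1, h2, ← Measure.map_apply hH1meas (measurableSet_singleton t), hdist1,
      Measure.map_apply hY1meas (measurableSet_singleton t)]
  have hH0s : ∀ s : ℝ, μ {ω | H0 ω = s} = μ {ω | Y0 ω = s} := by
    intro s
    have h1 : {ω | H0 ω = s} = H0 ⁻¹' {s} := rfl
    have h2 : {ω | Y0 ω = s} = Y0 ⁻¹' {s} := rfl
    rw [h1, h2, ← Measure.map_apply hH0meas (measurableSet_singleton s), hdist0,
      Measure.map_apply hY0meas (measurableSet_singleton s)]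
  have hHprod : ∀ (t s : ℝ), μ {ω | H1 ω = t ∧ H0 ω = s}
      = μ {ω | Y1 ω = t} * μ {ω | Y0 ω = s} := by
    intro t s
    have h : {ω | H1 ω = t ∧ H0 ω = s} = H1 ⁻¹' {t} ∩ H0 ⁻¹' {s} := rfl
    rw [h, hindep.measure_inter_preimage_eq_mul _ _ (measurableSet_singleton t)
      (measurableSet_singleton s)]
    rw [← hH1t, ← hH0s]; rfl
  rw [key_split μ Y1 Y0 hY1meas hY0meas 𝓣 𝓢 hY1n hY0n,
      key_split μ H1 H0 hH1meas hH0meas 𝓣 𝓢 hH1n hH0n]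
  have hH : (∑ t ∈ 𝓣, ∑ s ∈ 𝓢, if s ≤ t then μ {ω | H1 ω = t ∧ H0 ω = s} else 0)
      = ∑ t ∈ 𝓣, ∑ s ∈ 𝓢, if s ≤ t then μ {ω | Y1 ω = t} * μ {ω | Y0 ω = s} else 0 := by
    refine Finset.sum_congr rfl fun t _ => Finset.sum_congr rfl fun s _ => ?_
    rw [hHprod]
  rw [hH]
  have hne : ∀ (f : ℝ → ℝ → ENNReal), (∀ t s, f t s ≠ ⊤) →
      (∑ t ∈ 𝓣, ∑ s ∈ 𝓢, if s ≤ t then f t s else 0).toReal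
      = ∑ t ∈ 𝓣, ∑ s ∈ 𝓢, if s ≤ t then (f t s).toReal else 0 := by
    intro f hf
    rw [ENNReal.toReal_sum (fun t _ => ENNReal.sum_ne_top.mpr
      (fun s _ => by split <;> simp [hf t s]))]
    refine Finset.sum_congr rfl fun t _ => ?_
    rw [ENNReal.toReal_sum (fun s _ => by split <;> simp [hf t s])]
    refine Finset.sum_congr rfl fun s _ => ?_
    split <;> simp
  rw [hne _ (fun t s => measure_ne_top μ _),
      hne _ (fun t s => ENNReal.mul_ne_top (measure_ne_top μ _) (measure_ne_top μ _))]
  rw [← Finset.sum_sub_distrib]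
  refine Finset.sum_congr rfl fun t _ => ?_
  rw [← Finset.sum_sub_distrib]
  refine Finset.sum_congr rfl fun s _ => ?_
  rw [ENNReal.toReal_mul]
  split <;> ring
end

section
/- Let Y₁, Y₀ be {0,1}-valued random variables, and H₁, H₀ independent with H_a distributed as Y_a. Then P(Y₁ ≥ Y₀) − P(H₁ ≥ H₀) = Cov(Y₁, Y₀). -/
open MeasureTheory ProbabilityTheory

/-- Proposition 7, binary outcomes:
P(Y₁ ≥ Y₀) − P(H₁ ≥ H₀) = Cov(Y₁, Y₀). -/
theorem stmt19 {Ω : Type*} [MeasurableSpace Ω] (μ : Measure Ω) [IsProbabilityMeasure μ]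
    (Y1 Y0 H1 H0 : Ω → ℝ)
    (hY1meas : Measurable Y1) (hY0meas : Measurable Y0)
    (hH1meas : Measurable H1) (hH0meas : Measurable H0)
    (hY1 : ∀ ω, Y1 ω = 0 ∨ Y1 ω = 1) (hY0 : ∀ ω, Y0 ω = 0 ∨ Y0 ω = 1)
    (hdist1 : Measure.map H1 μ = Measure.map Y1 μ)
    (hdist0 : Measure.map H0 μ = Measure.map Y0 μ)
    (hindep : IndepFun H1 H0 μ) :
    (μ {ω | Y0 ω ≤ Y1 ω}).toReal - (μ {ω | H0 ω ≤ H1 ω}).toReal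
    = (∫ ω, Y1 ω * Y0 ω ∂μ) - (∫ ω, Y1 ω ∂μ) * ∫ ω, Y0 ω ∂μ := by
  set A : Set Ω := Y1 ⁻¹' {1} with hAdef
  set B : Set Ω := Y0 ⁻¹' {1} with hBdef
  have hA : MeasurableSet A := hY1meas (measurableSet_singleton 1)
  have hB : MeasurableSet B := hY0meas (measurableSet_singleton 1)
  have hms0 : MeasurableSet ({0} : Set ℝ) := measurableSet_singleton 0
  have hms1 : MeasurableSet ({1} : Set ℝ) := measurableSet_singleton 1
  -- integrals as measures
  have hY1ind : Y1 = A.indicator (fun _ => (1:ℝ)) := by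
    funext ω
    rcases hY1 ω with h | h <;>
      simp [Set.indicator, hAdef, Set.mem_preimage, h]
  have hY0ind : Y0 = B.indicator (fun _ => (1:ℝ)) := by
    funext ω
    rcases hY0 ω with h | h <;>
      simp [Set.indicator, hBdef, Set.mem_preimage, h]
  have hprodind : (fun ω => Y1 ω * Y0 ω) = (A ∩ B).indicator (fun _ => (1:ℝ)) := by
    funext ω
    rcases hY1 ω with h | h <;> rcases hY0 ω with h' | h' <;>
      simp [Set.indicator, hAdef, hBdef, Set.mem_preimage, h, h']
  have hint1 : (∫ ω, Y1 ω ∂μ) = (μ A).toReal := by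
    rw [hY1ind, integral_indicator_const (1:ℝ) hA]; simp; rfl
  have hint0 : (∫ ω, Y0 ω ∂μ) = (μ B).toReal := by
    rw [hY0ind, integral_indicator_const (1:ℝ) hB]; simp; rfl
  have hintp : (∫ ω, Y1 ω * Y0 ω ∂μ) = (μ (A ∩ B)).toReal := by
    rw [hprodind, integral_indicator_const (1:ℝ) (hA.inter hB)]; simp; rfl
  -- Y side set
  have hYset : {ω | Y0 ω ≤ Y1 ω} = (Aᶜ ∩ B)ᶜ := by
    ext ω
    rcases hY1 ω with h | h <;> rcases hY0 ω with h' | h' <;>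
      simp [hAdef, hBdef, Set.mem_preimage, h, h']
  have hBsplit : μ (B ∩ A) + μ (B \ A) = μ B := measure_inter_add_diff B hA
  have hBA : Aᶜ ∩ B = B \ A := by ext ω; simp [Set.mem_diff]; tauto
  have hPY : (μ {ω | Y0 ω ≤ Y1 ω}).toReal
      = 1 - ((μ B).toReal - (μ (A ∩ B)).toReal) := by
    rw [hYset, measure_compl ((hA.compl.inter hB)) (measure_ne_top μ _), hBA]
    rw [ENNReal.toReal_sub_of_le (measure_mono (Set.subset_univ _)) (measure_ne_top μ _)]
    have : (μ (B \ A)).toReal = (μ B).toReal - (μ (B ∩ A)).toReal := by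
      rw [← hBsplit, ENNReal.toReal_add (measure_ne_top μ _) (measure_ne_top μ _)]
      ring
    rw [this, Set.inter_comm A B]
    simp
  -- H side: a.e. {0,1}-valued
  have haeval : ∀ (H Y : Ω → ℝ), Measurable H → Measurable Y →
      Measure.map H μ = Measure.map Y μ → (∀ ω, Y ω = 0 ∨ Y ω = 1) →
      ∀ᵐ ω ∂μ, H ω = 0 ∨ H ω = 1 := by
    intro H Y hH hY hmap hval
    have hmsc : MeasurableSet (({0,1} : Set ℝ)ᶜ) :=
      (hms0.union hms1).compl
    have h0 : μ (H ⁻¹' (({0,1} : Set ℝ)ᶜ)) = 0 := by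
      rw [← Measure.map_apply hH hmsc, hmap, Measure.map_apply hY hmsc]
      have : Y ⁻¹' (({0,1} : Set ℝ)ᶜ) = ∅ := by
        ext ω; simp only [Set.mem_preimage, Set.mem_compl_iff, Set.mem_insert_iff,
          Set.mem_singleton_iff, Set.mem_empty_iff_false, iff_false, not_not]
        exact hval ω
      simp [this]
    rw [ae_iff]
    have heq : {ω | ¬(H ω = 0 ∨ H ω = 1)} = H ⁻¹' (({0,1} : Set ℝ)ᶜ) := by
      ext ω
      simp only [Set.mem_setOf_eq, Set.mem_preimage, Set.mem_compl_iff, Set.mem_insert_iff,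
        Set.mem_singleton_iff]
    rw [heq]
    exact h0
  have h1ae := haeval H1 Y1 hH1meas hY1meas hdist1 hY1
  have h0ae := haeval H0 Y0 hH0meas hY0meas hdist0 hY0
  -- measures of H preimages
  have hmap1 : ∀ (s : Set ℝ), MeasurableSet s → μ (H1 ⁻¹' s) = μ (Y1 ⁻¹' s) := by
    intro s hs
    rw [← Measure.map_apply hH1meas hs, hdist1, Measure.map_apply hY1meas hs]
  have hmap0 : ∀ (s : Set ℝ), MeasurableSet s → μ (H0 ⁻¹' s) = μ (Y0 ⁻¹' s) := by
    intro s hs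
    rw [← Measure.map_apply hH0meas hs, hdist0, Measure.map_apply hY0meas hs]
  -- {H0 ≤ H1}ᶜ = {H1 < H0} =ᵐ H1⁻¹{0} ∩ H0⁻¹{1}
  have hHset : ({ω | H0 ω ≤ H1 ω} : Set Ω) =ᵐ[μ] (((H1 ⁻¹' {0} ∩ H0 ⁻¹' {1} : Set Ω))ᶜ : Set Ω) := by
    rw [Filter.eventuallyEq_set]
    filter_upwards [h1ae, h0ae] with ω h1 h0
    rw [Set.mem_compl_iff, Set.mem_inter_iff, Set.mem_preimage, Set.mem_preimage,
      Set.mem_singleton_iff, Set.mem_singleton_iff]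
    rcases h1 with h1 | h1 <;> rcases h0 with h0 | h0 <;> rw [h1, h0] <;> norm_num
  have hindepm : μ (H1 ⁻¹' {0} ∩ H0 ⁻¹' {1}) = μ (H1 ⁻¹' {0}) * μ (H0 ⁻¹' {1}) :=
    hindep.measure_inter_preimage_eq_mul _ _ hms0 hms1
  have hY1zero : Y1 ⁻¹' {0} = Aᶜ := by
    ext ω; rcases hY1 ω with h | h <;> simp [hAdef, Set.mem_preimage, h]
  have hcompl : (μ (Y1 ⁻¹' {0})).toReal = 1 - (μ A).toReal := by
    rw [hY1zero, measure_compl hA (measure_ne_top μ _),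
      ENNReal.toReal_sub_of_le (measure_mono (Set.subset_univ _)) (measure_ne_top μ _)]
    simp
  have hPH : (μ {ω | H0 ω ≤ H1 ω}).toReal
      = 1 - (1 - (μ A).toReal) * (μ B).toReal := by
    rw [measure_congr hHset,
      measure_compl ((hH1meas hms0).inter (hH0meas hms1)) (measure_ne_top μ _),
      ENNReal.toReal_sub_of_le (measure_mono (Set.subset_univ _)) (measure_ne_top μ _),
      hindepm, hmap1 _ hms0, hmap0 _ hms1, ENNReal.toReal_mul, hcompl]
    simp [hBdef]
  rw [hPY, hPH, hint1, hint0, hintp]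
  ring
end
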